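/- arXiv:0905.3052 — 3 statements merged into one kernel-verified Lean document; each statement's English description precedes it below -/
import Mathlib

section
/- Let μ be a non-atomic Borel probability measure whose topological support is exactly F, where F is a fractal subset of [0,1] satisfying the lacunarity condition with constant λ ∈ (0,1], and let a ≥ 2/λ and q ∈ ℝ. Then β(q) = inf{ β ∈ ℝ : Σ_{n=1}^∞ μ(Ī_n^a)^q |I_n|^β < ∞ }, where β(q) := inf{ β ∈ ℝ : limsup_{r→0⁺} r^β Σ_{B ∈ B_r^*} μ(B̄^a)^q = 0 }. -/
open MeasureTheory Filter Set
open scoped Classical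

noncomputable section

/-- The enlargement `B̄^a` of the interval `[s,t]` by the factor `1+a` about its centre. -/
def enlarge (a s t : ℝ) : Set ℝ :=
  Set.Icc (s - a * (t - s) / 2) (t + a * (t - s) / 2)

/-- The moment sum `Σ_{B ∈ B_r^*} μ(B̄^a)^q` over grid intervals of length `r`
whose interior meets the support of `μ` (i.e. with `μ(B) > 0`). -/
def gridSum (μ : Measure ℝ) (a q R : ℝ) : ℝ :=
  ∑' m : ℤ, if 0 < μ (Set.Icc ((m : ℝ) * R) (((m : ℝ) + 1) * R))
    then (μ (enlarge a ((m : ℝ) * R) (((m : ℝ) + 1) * R))).toReal ^ q else 0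

/-- The coarse multifractal moment function
`β_a(q) = inf{β : limsup_{r→0⁺} r^β Σ_{B ∈ B_r^*} μ(B̄^a)^q = 0}`.
(For the nonnegative quantity `r^β · Σ…`, vanishing of the `limsup` as `r → 0⁺`
is the same as convergence to `0`.) -/
def betaA (μ : Measure ℝ) (a q : ℝ) : ℝ :=
  sInf {β : ℝ | Filter.Tendsto (fun R => R ^ β * gridSum μ a q R)
    (nhdsWithin 0 (Set.Ioi 0)) (nhds 0)}

/-- `F` is a "fractal subset" of `[0,1]`: compact, Lebesgue-null, containing `0` and `1`. -/
def IsFractalSubset (F : Set ℝ) : Prop :=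
  IsCompact F ∧ F ⊆ Set.Icc 0 1 ∧ (0 : ℝ) ∈ F ∧ (1 : ℝ) ∈ F ∧ MeasureTheory.volume F = 0

/-- The complementary intervals `I_n = (l n, r n)` of `F` in `[0,1]`, enumerated with
nonincreasing lengths. -/
structure FractalComplement (F : Set ℝ) where
  l : ℕ → ℝ
  r : ℕ → ℝ
  lt : ∀ n, l n < r n
  disj : Pairwise fun n m => Disjoint (Set.Ioo (l n) (r n)) (Set.Ioo (l m) (r m))
  union : (⋃ n, Set.Ioo (l n) (r n)) = Set.Icc (0 : ℝ) 1 \ F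
  mono : ∀ n, r (n + 1) - l (n + 1) ≤ r n - l n

/-- The length `|I_n|` of the `n`-th complementary interval. -/
def FractalComplement.len {F : Set ℝ} (c : FractalComplement F) (n : ℕ) : ℝ := c.r n - c.l n

/-- The enlargement `Ī_n^a` of the closure of the complementary interval `I_n`. -/
def FractalComplement.I {F : Set ℝ} (c : FractalComplement F) (a : ℝ) (n : ℕ) : Set ℝ :=
  enlarge a (c.l n) (c.r n)

/-- The lacunarity condition with constant `lam`: every interval `[x-r, x+r]` with `x ∈ F`
and `0 < r ≤ 1` contains a complementary interval of length at least `lam * r`. -/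
def Lacunary {F : Set ℝ} (c : FractalComplement F) (lam : ℝ) : Prop :=
  ∀ x ∈ F, ∀ R : ℝ, 0 < R → R ≤ 1 → ∃ n,
    Set.Ioo (c.l n) (c.r n) ⊆ Set.Icc (x - R) (x + R) ∧ lam * R ≤ c.len n

/-- The topological support of `μ` is exactly `F`. -/
def HasSupport (μ : Measure ℝ) (F : Set ℝ) : Prop :=
  μ Fᶜ = 0 ∧ ∀ x ∈ F, ∀ ε : ℝ, 0 < ε → 0 < μ (Set.Ioo (x - ε) (x + ε))


section AuxLemmas

lemma ioo_subset_icc_endpoints {s t A B : ℝ} (h : s < t) (hsub : Set.Ioo s t ⊆ Set.Icc A B) :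
    A ≤ s ∧ t ≤ B := by
  constructor
  · by_contra hc
    push_neg at hc
    have hmem : (s + min A t) / 2 ∈ Set.Ioo s t := by
      constructor
      · have : s < min A t := lt_min hc h
        linarith [this]
      · have h1 : min A t ≤ t := min_le_right _ _
        have : s < min A t := lt_min hc h
        rcases lt_or_eq_of_le h1 with h2 | h2
        · linarith
        · linarith
    have := hsub hmem
    have h1 : A ≤ (s + min A t) / 2 := this.1
    have h2 : min A t ≤ A := min_le_left _ _
    have : s < min A t := lt_min hc h
    linarith
  · by_contra hc
    push_neg at hc
    have hmem : (max B s + t) / 2 ∈ Set.Ioo s t := by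
      constructor
      · have h1 : s ≤ max B s := le_max_right _ _
        have : max B s < t := max_lt hc h
        rcases lt_or_eq_of_le h1 with h2 | h2
        · linarith
        · linarith
      · have : max B s < t := max_lt hc h
        linarith
    have := hsub hmem
    have h1 : (max B s + t) / 2 ≤ B := this.2
    have h2 : B ≤ max B s := le_max_left _ _
    have : max B s < t := max_lt hc h
    linarith

lemma disjoint_Ioo_of_le {a b c d : ℝ} (h : b ≤ c) :
    Disjoint (Set.Ioo a b) (Set.Ioo c d) := by
  rw [Set.disjoint_left]
  rintro x ⟨_, h2⟩ ⟨h3, _⟩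
  linarith

/-- existence of a dyadic number in `[u, 2u)` for `0 < u ≤ 1`. -/
lemma exists_dyadic {u : ℝ} (hu : 0 < u) (hu1 : u ≤ 1) :
    ∃ k : ℕ, u ≤ (1/2 : ℝ) ^ k ∧ (1/2 : ℝ) ^ k < 2 * u := by
  have hex : ∃ k : ℕ, (1/2 : ℝ) ^ k < 2 * u :=
    exists_pow_lt_of_lt_one (by linarith) (by norm_num)
  classical
  let k := Nat.find hex
  refine ⟨k, ?_, Nat.find_spec hex⟩
  rcases Nat.eq_zero_or_pos k with hk | hk
  · rw [hk]; simpa using hu1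
  · have hkk : ¬ ((1/2 : ℝ) ^ (k - 1) < 2 * u) := Nat.find_min hex (by omega)
    push_neg at hkk
    have : (1/2 : ℝ) ^ k = (1/2 : ℝ) ^ (k-1) * (1/2) := by
      rw [← pow_succ]
      congr 1
      omega
    rw [this]
    linarith

lemma rpow_mono_meas (μ : MeasureTheory.Measure ℝ) [MeasureTheory.IsFiniteMeasure μ]
    {A B : Set ℝ} {q : ℝ} (hq : 0 ≤ q) (hAB : A ⊆ B) :
    (μ A).toReal ^ q ≤ (μ B).toReal ^ q :=
  Real.rpow_le_rpow ENNReal.toReal_nonneg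
    (ENNReal.toReal_mono (MeasureTheory.measure_ne_top μ B) (measure_mono hAB)) hq

lemma rpow_anti_meas (μ : MeasureTheory.Measure ℝ) [MeasureTheory.IsFiniteMeasure μ]
    {A B : Set ℝ} {q : ℝ} (hq : q ≤ 0) (hAB : A ⊆ B) (h0 : 0 < μ A) :
    (μ B).toReal ^ q ≤ (μ A).toReal ^ q :=
  Real.rpow_le_rpow_of_nonpos
    (ENNReal.toReal_pos h0.ne' (MeasureTheory.measure_ne_top μ A))
    (ENNReal.toReal_mono (MeasureTheory.measure_ne_top μ B) (measure_mono hAB)) hq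

/-- Counting disjoint intervals of length `≥ cc` inside `[A,B]`. -/
lemma card_mul_le_of_disjoint {ι : Type*} (t : Finset ι) (f g : ι → ℝ) {cc A B : ℝ}
    (hd : (t : Set ι).PairwiseDisjoint (fun i => Set.Ioo (f i) (g i)))
    (hcc : 0 < cc) (hlen : ∀ i ∈ t, cc ≤ g i - f i)
    (hsub : ∀ i ∈ t, Set.Ioo (f i) (g i) ⊆ Set.Icc A B) :
    (t.card : ℝ) * cc ≤ max (B - A) 0 := by
  rcases t.eq_empty_or_nonempty with rfl | ⟨i0, hi0⟩
  · simp [le_max_iff]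
  have hAB : cc ≤ B - A := by
    have h1 := hlen i0 hi0
    have h2 := ioo_subset_icc_endpoints (by linarith [hlen i0 hi0] : f i0 < g i0) (hsub i0 hi0)
    linarith [h2.1, h2.2]
  have hmeas : MeasureTheory.volume (⋃ i ∈ t, Set.Ioo (f i) (g i))
      = ∑ i ∈ t, MeasureTheory.volume (Set.Ioo (f i) (g i)) :=
    MeasureTheory.measure_biUnion_finset hd (fun i _ => measurableSet_Ioo)
  have hle : (∑ i ∈ t, MeasureTheory.volume (Set.Ioo (f i) (g i)))
      ≤ ENNReal.ofReal (B - A) := by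
    rw [← hmeas, ← Real.volume_Icc]
    exact measure_mono (Set.iUnion₂_subset hsub)
  have hsum : (∑ i ∈ t, MeasureTheory.volume (Set.Ioo (f i) (g i)))
      = ENNReal.ofReal (∑ i ∈ t, (g i - f i)) := by
    rw [ENNReal.ofReal_sum_of_nonneg (fun i hi => by linarith [hlen i hi])]
    exact Finset.sum_congr rfl (fun i _ => Real.volume_Ioo)
  rw [hsum, ENNReal.ofReal_le_ofReal_iff (by linarith)] at hle
  have hcard : (t.card : ℝ) * cc ≤ ∑ i ∈ t, (g i - f i) := by
    calc (t.card : ℝ) * cc = ∑ _i ∈ t, cc := by rw [Finset.sum_const, nsmul_eq_mul]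
    _ ≤ _ := Finset.sum_le_sum hlen
  calc (t.card : ℝ) * cc ≤ B - A := le_trans hcard hle
  _ ≤ _ := le_max_left _ _

end AuxLemmas

section FractalLemmas

variable {F : Set ℝ} (c : FractalComplement F)

lemma FractalComplement.len_pos (n : ℕ) : 0 < c.len n := sub_pos.mpr (c.lt n)

lemma FractalComplement.ioo_subset (n : ℕ) :
    Set.Ioo (c.l n) (c.r n) ⊆ Set.Icc (0:ℝ) 1 \ F := by
  rw [← c.union]; exact Set.subset_iUnion (fun n => Set.Ioo (c.l n) (c.r n)) n

lemma FractalComplement.endpoints_mem (n : ℕ) : 0 ≤ c.l n ∧ c.r n ≤ 1 := by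
  have h := ioo_subset_icc_endpoints (c.lt n)
    (fun x hx => ((c.ioo_subset n) hx).1)
  exact ⟨h.1, h.2⟩

lemma FractalComplement.len_le_one (n : ℕ) : c.len n ≤ 1 := by
  have h := c.endpoints_mem n
  have := c.lt n
  unfold FractalComplement.len
  linarith [h.1, h.2]

lemma FractalComplement.left_mem (n : ℕ) : c.l n ∈ F := by
  by_contra hc
  have hl0 : 0 ≤ c.l n := (c.endpoints_mem n).1
  have hl1 : c.l n ≤ 1 := by linarith [(c.endpoints_mem n).2, (c.lt n).le]
  have : c.l n ∈ Set.Icc (0:ℝ) 1 \ F := ⟨⟨hl0, hl1⟩, hc⟩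
  rw [← c.union] at this
  obtain ⟨m, hm⟩ := Set.mem_iUnion.mp this
  have hmn : m ≠ n := by
    rintro rfl
    exact absurd hm.1 (lt_irrefl _)
  set u := min (c.r m) (c.r n) with hu
  have hxu : c.l n < u := lt_min hm.2 (c.lt n)
  have hmem1 : (c.l n + u)/2 ∈ Set.Ioo (c.l m) (c.r m) := by
    constructor
    · have := hm.1; have := min_le_left (c.r m) (c.r n); linarith
    · have := min_le_left (c.r m) (c.r n); linarith
  have hmem2 : (c.l n + u)/2 ∈ Set.Ioo (c.l n) (c.r n) := by
    constructor
    · linarith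
    · have := min_le_right (c.r m) (c.r n); linarith
  exact Set.disjoint_left.mp (c.disj hmn) hmem1 hmem2

lemma FractalComplement.summable_len : Summable c.len := by
  have hmeas : MeasureTheory.volume (⋃ n, Set.Ioo (c.l n) (c.r n))
      = ∑' n, MeasureTheory.volume (Set.Ioo (c.l n) (c.r n)) :=
    MeasureTheory.measure_iUnion c.disj (fun n => measurableSet_Ioo)
  have hfin : (∑' n, MeasureTheory.volume (Set.Ioo (c.l n) (c.r n))) ≠ ⊤ := by
    rw [← hmeas]
    have hsub : (⋃ n, Set.Ioo (c.l n) (c.r n)) ⊆ Set.Icc (0:ℝ) 1 := by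
      rw [c.union]; exact Set.diff_subset
    refine ne_of_lt (lt_of_le_of_lt (measure_mono hsub) ?_)
    rw [Real.volume_Icc]
    norm_num
  have := ENNReal.summable_toReal hfin
  refine this.congr (fun n => ?_)
  show (MeasureTheory.volume (Set.Ioo (c.l n) (c.r n))).toReal = c.len n
  rw [Real.volume_Ioo, ENNReal.toReal_ofReal (le_of_lt (sub_pos.mpr (c.lt n)))]
  rfl

lemma FractalComplement.finite_big (δ : ℝ) (hδ : 0 < δ) : {n : ℕ | δ ≤ c.len n}.Finite := by
  have h := c.summable_len.tendsto_atTop_zero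
  have h2 : ∀ᶠ n in Filter.atTop, c.len n < δ := h.eventually (eventually_lt_nhds hδ)
  obtain ⟨N, hN⟩ := Filter.eventually_atTop.mp h2
  apply Set.Finite.subset (Set.finite_Iio N)
  intro n hn
  simp only [Set.mem_Iio]
  by_contra hc
  push_neg at hc
  exact absurd (hN n hc) (not_lt.mpr hn)

end FractalLemmas

section GridLemmas

open MeasureTheory

/-- the grid interval `[mR, (m+1)R]`. -/
def gbox (R : ℝ) (m : ℤ) : Set ℝ := Set.Icc ((m:ℝ)*R) (((m:ℝ)+1)*R)

/-- the enlarged grid interval. -/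
def genl (a R : ℝ) (m : ℤ) : Set ℝ := enlarge a ((m:ℝ)*R) (((m:ℝ)+1)*R)

/-- the single term of `gridSum`. -/
def gridTerm (μ : Measure ℝ) (a q R : ℝ) (m : ℤ) : ℝ :=
  if 0 < μ (gbox R m) then (μ (genl a R m)).toReal ^ q else 0

lemma gridSum_eq_tsum (μ : Measure ℝ) (a q R : ℝ) :
    gridSum μ a q R = ∑' m : ℤ, gridTerm μ a q R m := rfl

lemma gridTerm_nonneg (μ : Measure ℝ) (a q R : ℝ) (m : ℤ) : 0 ≤ gridTerm μ a q R m := by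
  unfold gridTerm
  split
  · exact Real.rpow_nonneg ENNReal.toReal_nonneg q
  · exact le_refl 0

lemma gbox_subset_genl {a R : ℝ} (ha : 0 ≤ a) (hR : 0 ≤ R) (m : ℤ) :
    gbox R m ⊆ genl a R m := by
  unfold gbox genl enlarge
  apply Set.Icc_subset_Icc
  · nlinarith
  · nlinarith

lemma mem_gbox {R : ℝ} (hR : 0 < R) (y : ℝ) : y ∈ gbox R ⌊y/R⌋ := by
  unfold gbox
  have h1 : ((⌊y/R⌋ : ℝ)) * R ≤ (y/R) * R := mul_le_mul_of_nonneg_right (Int.floor_le _) hR.le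
  have h2 : (y/R) * R ≤ ((⌊y/R⌋ : ℝ) + 1) * R :=
    mul_le_mul_of_nonneg_right (Int.lt_floor_add_one (y/R)).le hR.le
  have h3 : (y/R) * R = y := by field_simp
  rw [h3] at h1 h2
  exact ⟨h1, h2⟩

/-- if a set has positive measure, some grid box meets it with positive measure. -/
lemma exists_box_pos (μ : Measure ℝ) {R : ℝ} (hR : 0 < R) {A : Set ℝ} (hA : 0 < μ A) :
    ∃ m : ℤ, 0 < μ (gbox R m) ∧ (gbox R m ∩ A).Nonempty := by
  have hcover : A ⊆ ⋃ m : ℤ, (gbox R m ∩ A) := by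
    intro y hy
    exact Set.mem_iUnion.mpr ⟨⌊y/R⌋, mem_gbox hR y, hy⟩
  by_contra hc
  push_neg at hc
  have hzero : ∀ m : ℤ, μ (gbox R m ∩ A) = 0 := by
    intro m
    by_contra h0
    have h1 : 0 < μ (gbox R m) :=
      lt_of_lt_of_le (pos_iff_ne_zero.mpr h0) (measure_mono Set.inter_subset_left)
    rw [hc m h1] at h0
    exact h0 measure_empty
  have := measure_iUnion_le (μ := μ) (fun m : ℤ => gbox R m ∩ A)
  rw [ENNReal.tsum_eq_zero.mpr hzero] at this
  exact absurd (le_trans (measure_mono hcover) this) (by simpa using hA.ne')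

/-- a grid box of positive measure contains a point of `F`. -/
lemma exists_F_mem_box {F : Set ℝ} (μ : Measure ℝ) (hsupp : HasSupport μ F)
    {R : ℝ} {m : ℤ} (hm : 0 < μ (gbox R m)) : ∃ x ∈ F, x ∈ gbox R m := by
  by_contra hc
  push_neg at hc
  have hsub : gbox R m ⊆ Fᶜ := fun x hx => fun hxF => hc x hxF hx
  exact absurd (le_trans (measure_mono hsub) (le_of_eq hsupp.1)) (by simpa using hm.ne')

/-- index bound for boxes with positive measure. -/
lemma box_index_bound {F : Set ℝ} (hF : IsFractalSubset F) (μ : Measure ℝ)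
    (hsupp : HasSupport μ F) {R : ℝ} (hR : 0 < R) {m : ℤ} (hm : 0 < μ (gbox R m)) :
    m ∈ Finset.Icc (-1 : ℤ) ⌊1/R⌋ := by
  obtain ⟨x, hxF, hx1, hx2⟩ := exists_F_mem_box μ hsupp hm
  have hx01 : x ∈ Set.Icc (0:ℝ) 1 := hF.2.1 hxF
  rw [Finset.mem_Icc]
  constructor
  · have h1 : (0:ℝ) ≤ ((m:ℝ)+1)*R := le_trans hx01.1 hx2
    have h2 : (0:ℝ) ≤ (m:ℝ)+1 := nonneg_of_mul_nonneg_right (by linarith [h1] : 0 ≤ R*((m:ℝ)+1)) hR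
    exact_mod_cast (by linarith : (-1:ℝ) ≤ (m:ℝ))
  · apply Int.le_floor.mpr
    have h1 : (m:ℝ)*R ≤ 1 := le_trans hx1 hx01.2
    rw [le_div_iff₀ hR]
    exact h1

/-- the index set of boxes of positive measure. -/
def sIdx (μ : Measure ℝ) (R : ℝ) : Finset ℤ :=
  (Finset.Icc (-1 : ℤ) ⌊1/R⌋).filter (fun m => 0 < μ (gbox R m))

lemma gridSum_eq_sum {F : Set ℝ} (hF : IsFractalSubset F) (μ : Measure ℝ)
    (hsupp : HasSupport μ F) (a q : ℝ) {R : ℝ} (hR : 0 < R) :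
    gridSum μ a q R = ∑ m ∈ sIdx μ R, (μ (genl a R m)).toReal ^ q := by
  rw [gridSum_eq_tsum]
  rw [tsum_eq_sum (s := sIdx μ R) ?h]
  · apply Finset.sum_congr rfl
    intro m hm
    unfold gridTerm
    rw [if_pos (Finset.mem_filter.mp hm).2]
  · intro m hm
    unfold gridTerm
    rw [if_neg]
    intro hpos
    exact hm (Finset.mem_filter.mpr ⟨box_index_bound hF μ hsupp hR hpos, hpos⟩)

lemma gridTerm_summable {F : Set ℝ} (hF : IsFractalSubset F) (μ : Measure ℝ)
    (hsupp : HasSupport μ F) (a q : ℝ) {R : ℝ} (hR : 0 < R) :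
    Summable (gridTerm μ a q R) := by
  apply summable_of_ne_finset_zero (s := sIdx μ R)
  intro m hm
  unfold gridTerm
  rw [if_neg]
  intro hpos
  exact hm (Finset.mem_filter.mpr ⟨box_index_bound hF μ hsupp hR hpos, hpos⟩)

lemma sum_le_gridSum {F : Set ℝ} (hF : IsFractalSubset F) (μ : Measure ℝ)
    (hsupp : HasSupport μ F) (a q : ℝ) {R : ℝ} (hR : 0 < R) (t : Finset ℤ)
    (ht : ∀ m ∈ t, 0 < μ (gbox R m)) :
    ∑ m ∈ t, (μ (genl a R m)).toReal ^ q ≤ gridSum μ a q R := by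
  rw [gridSum_eq_tsum]
  calc ∑ m ∈ t, (μ (genl a R m)).toReal ^ q = ∑ m ∈ t, gridTerm μ a q R m := by
        apply Finset.sum_congr rfl
        intro m hm
        unfold gridTerm
        rw [if_pos (ht m hm)]
  _ ≤ _ := Summable.sum_le_tsum t (fun m _ => gridTerm_nonneg μ a q R m)
      (gridTerm_summable hF μ hsupp a q hR)

lemma gridSum_nonneg (μ : Measure ℝ) (a q R : ℝ) : 0 ≤ gridSum μ a q R := by
  rw [gridSum_eq_tsum]
  exact tsum_nonneg (gridTerm_nonneg μ a q R)

/-- positivity of the measure of the enlarged complementary intervals. -/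
lemma pos_measure_I {F : Set ℝ} (c : FractalComplement F) (μ : Measure ℝ)
    (hsupp : HasSupport μ F) {a : ℝ} (ha : 0 < a) (n : ℕ) : 0 < μ (c.I a n) := by
  have he : 0 < a * c.len n / 2 := by
    have := c.len_pos n
    positivity
  have hpos := hsupp.2 (c.l n) (c.left_mem n) _ he
  refine lt_of_lt_of_le hpos (measure_mono ?_)
  unfold FractalComplement.I enlarge
  intro y hy
  simp only [Set.mem_Ioo] at hy
  have h1 : c.len n = c.r n - c.l n := rfl
  constructor
  · rw [← h1]; linarith [hy.1]
  · rw [← h1]; linarith [hy.2, (c.lt n), c.len_pos n]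
end GridLemmas

section SelectA

open MeasureTheory

lemma selectA {F : Set ℝ} (c : FractalComplement F)
    {lam : ℝ} (hlam0 : 0 < lam) (hlam1 : lam ≤ 1) (hlac : Lacunary c lam)
    (μ : Measure ℝ) [IsProbabilityMeasure μ] (hsupp : HasSupport μ F)
    {q a : ℝ} (ha : 2 / lam ≤ a) {c0 : ℝ}
    (hc0 : c0 = if 0 ≤ q then (1+a/2)/((1+a/2)*lam - 1) else a/(2*(1+a)))
    {R : ℝ} (hR : 0 < R) (hR1 : c0 * R ≤ 1) {m : ℤ} (hm : 0 < μ (gbox R m)) :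
    ∃ n : ℕ, (μ (genl a R m)).toReal ^ q ≤ (μ (c.I a n)).toReal ^ q ∧
      lam * (c0 * R) ≤ c.len n ∧ (m:ℝ)*R - c0*R ≤ c.l n ∧ c.r n ≤ ((m:ℝ)+1)*R + c0*R := by
  have halam : 2 ≤ a * lam := by
    rw [div_le_iff₀ hlam0] at ha; linarith
  have ha' : (0:ℝ) < a := by nlinarith
  have hden : 0 < (1+a/2)*lam - 1 := by nlinarith
  have hc0pos : 0 < c0 := by
    rw [hc0]; split
    · exact div_pos (by linarith) hden
    · positivity
  obtain ⟨x, hxF, hx⟩ := exists_F_mem_box μ hsupp hm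
  have hx1 : (m:ℝ)*R ≤ x := hx.1
  have hx2 : x ≤ ((m:ℝ)+1)*R := hx.2
  obtain ⟨n, hsub, hlen⟩ := hlac x hxF (c0*R) (by positivity) hR1
  obtain ⟨A1, A2⟩ := ioo_subset_icc_endpoints (c.lt n) hsub
  have hlenE : c.len n = c.r n - c.l n := rfl
  rw [hlenE] at hlen
  have hlenu : c.r n - c.l n ≤ 2*(c0*R) := by linarith
  refine ⟨n, ?_, hlenE ▸ hlen, by linarith, by linarith⟩
  rcases le_or_gt 0 q with hq | hq
  · have hc0E : c0 * ((1+a/2)*lam - 1) = 1+a/2 := by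
      rw [hc0, if_pos hq, div_mul_cancel₀ _ (ne_of_gt hden)]
    have hE' : c0 * ((1+a/2)*lam - 1) * R = (1+a/2) * R := by rw [hc0E]
    have h1 : (1+a/2)*(lam*(c0*R)) ≤ (1+a/2)*(c.r n - c.l n) :=
      mul_le_mul_of_nonneg_left hlen (by linarith)
    apply rpow_mono_meas μ hq
    unfold genl FractalComplement.I enlarge
    apply Set.Icc_subset_Icc
    · nlinarith [h1, hE', A2, hx2]
    · nlinarith [h1, hE', A1, hx1]
  · have hc0E2 : c0 * (2*(1+a)) = a := by
      rw [hc0, if_neg (not_le.mpr hq), div_mul_cancel₀]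
      positivity
    have hE2' : c0 * (2*(1+a)) * R = a * R := by rw [hc0E2]
    have h2 : (a/2)*(c.r n - c.l n) ≤ (a/2)*(2*(c0*R)) :=
      mul_le_mul_of_nonneg_left hlenu (by linarith)
    apply rpow_anti_meas μ hq.le ?_ (pos_measure_I c μ hsupp ha' n)
    unfold genl FractalComplement.I enlarge
    apply Set.Icc_subset_Icc
    · nlinarith [h2, hE2', A1, hx1]
    · nlinarith [h2, hE2', A2, hx2]

end SelectA

section SelectB

open MeasureTheory

lemma selectB {F : Set ℝ} (c : FractalComplement F)
    {lam : ℝ} (hlam0 : 0 < lam)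
    (μ : Measure ℝ) [IsProbabilityMeasure μ] (hsupp : HasSupport μ F)
    {q a : ℝ} (ha : 2 / lam ≤ a) (hlam1 : lam ≤ 1) {d1 d2 : ℝ}
    (hd1 : d1 = if 0 ≤ q then 1+4/a else a/(2*(4+a)))
    (hd2 : d2 = if 0 ≤ q then 2*(1+4/a) else a/(4+a))
    (n : ℕ) (hsmall : (1+4/a) * c.len n ≤ 1) :
    ∃ k : ℕ, ∃ m : ℤ, 0 < μ (gbox ((1/2:ℝ)^k) m) ∧
      (μ (c.I a n)).toReal ^ q ≤ (μ (genl a ((1/2:ℝ)^k) m)).toReal ^ q ∧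
      d1 * c.len n ≤ (1/2:ℝ)^k ∧ (1/2:ℝ)^k ≤ d2 * c.len n ∧
      c.l n - c.len n - (1/2:ℝ)^k ≤ (m:ℝ)*((1/2:ℝ)^k) ∧
      (m:ℝ)*((1/2:ℝ)^k) ≤ c.l n + c.len n := by
  have halam : 2 ≤ a * lam := by rw [div_le_iff₀ hlam0] at ha; linarith
  have ha' : (0:ℝ) < a := by nlinarith
  have hlp : 0 < c.len n := c.len_pos n
  have hl1 : c.len n ≤ 1 := c.len_le_one n
  have hlenE : c.len n = c.r n - c.l n := rfl
  -- choose the dyadic scale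
  have hdy : ∃ k : ℕ, d1 * c.len n ≤ (1/2:ℝ)^k ∧ (1/2:ℝ)^k < 2 * (d1 * c.len n) := by
    apply exists_dyadic
    · have hd1pos : 0 < d1 := by
        rw [hd1]; split
        · positivity
        · positivity
      positivity
    · rw [hd1]; split
      · exact hsmall
      · have hle1 : a/(2*(4+a)) ≤ 1 := by
          rw [div_le_one (by positivity)]; linarith
        exact mul_le_one₀ hle1 hlp.le hl1
  obtain ⟨k, hRl, hRu⟩ := hdy
  set R : ℝ := (1/2:ℝ)^k with hRdef
  have hRpos : 0 < R := by positivity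
  have hRu' : R ≤ d2 * c.len n := by
    rw [hd2]; rw [hd1] at hRu; split at hRu <;> [skip; skip] <;> rename_i hqs
    · rw [if_pos hqs]; linarith
    · rw [if_neg hqs]
      have : 2 * (a/(2*(4+a)) * c.len n) = a/(4+a) * c.len n := by field_simp
      linarith [this ▸ hRu]
  -- find a massy box near l n
  set η : ℝ := min R (c.len n) with hηdef
  have hη : 0 < η := lt_min hRpos hlp
  have hηR : η ≤ R := min_le_left _ _
  have hηl : η ≤ c.len n := min_le_right _ _
  have hpos := hsupp.2 (c.l n) (c.left_mem n) η hη
  obtain ⟨m, hbox, y, hy1, hy2⟩ := exists_box_pos μ hRpos hpos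
  have hy11 : (m:ℝ)*R ≤ y := hy1.1
  have hy12 : y ≤ ((m:ℝ)+1)*R := hy1.2
  have hy21 : c.l n - η < y := hy2.1
  have hy22 : y < c.l n + η := hy2.2
  have hmR : ((m:ℝ)+1)*R - (m:ℝ)*R = R := by ring
  have hrl : c.l n < c.r n := c.lt n
  refine ⟨k, m, hbox, ?_, hRl, hRu', by rw [hlenE]; linarith, by rw [hlenE]; linarith⟩
  rcases le_or_gt 0 q with hq | hq
  · -- q ≥ 0 : c.I a n ⊆ genl a R m
    rw [hd1, if_pos hq] at hRl
    have ha4 : a*((1+4/a)*c.len n) = (a+4)*c.len n := by field_simp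
    have hRa : (a+4)*c.len n ≤ a*R := by
      calc (a+4)*c.len n = a*((1+4/a)*c.len n) := ha4.symm
      _ ≤ a*R := mul_le_mul_of_nonneg_left hRl ha'.le
    have hRa' : (a+4)*(c.r n - c.l n) ≤ a*R := hlenE ▸ hRa
    have hηl' : η ≤ c.r n - c.l n := hlenE ▸ hηl
    apply rpow_mono_meas μ hq
    unfold genl FractalComplement.I enlarge
    apply Set.Icc_subset_Icc
    · linarith
    · linarith
  · -- q < 0 : genl a R m ⊆ c.I a n
    rw [hd1, if_neg (not_le.mpr hq)] at hRl hRu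
    have hRa2 : R*(4+a) ≤ a*c.len n := by
      have h2u : 2 * (a/(2*(4+a)) * c.len n) = a*c.len n/(4+a) := by field_simp
      rw [h2u] at hRu
      rw [← le_div_iff₀ (by positivity : (0:ℝ) < 4+a)]
      exact hRu.le
    have h0 : 0 < μ (genl a R m) :=
      lt_of_lt_of_le hbox (measure_mono (gbox_subset_genl ha'.le hRpos.le m))
    have hRa2' : R*(4+a) ≤ a*(c.r n - c.l n) := hlenE ▸ hRa2
    apply rpow_anti_meas μ hq.le _ h0
    unfold genl FractalComplement.I enlarge
    apply Set.Icc_subset_Icc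
    · linarith
    · linarith

end SelectB

section ClaimA

open MeasureTheory

lemma claimA {F : Set ℝ} (hF : IsFractalSubset F) (c : FractalComplement F)
    {lam : ℝ} (hlam0 : 0 < lam) (hlam1 : lam ≤ 1) (hlac : Lacunary c lam)
    (μ : Measure ℝ) [IsProbabilityMeasure μ] (hsupp : HasSupport μ F)
    {q a : ℝ} (ha : 2 / lam ≤ a) {β : ℝ}
    (hβ : Summable (fun n : ℕ => (μ (c.I a n)).toReal ^ q * c.len n ^ β))
    {ε : ℝ} (hε : 0 < ε) :
    Filter.Tendsto (fun R => R ^ (β+ε) * gridSum μ a q R) (nhdsWithin 0 (Set.Ioi 0)) (nhds 0) := by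
  classical
  have halam : 2 ≤ a * lam := by rw [div_le_iff₀ hlam0] at ha; linarith
  have ha' : (0:ℝ) < a := by nlinarith
  have hden : 0 < (1+a/2)*lam - 1 := by nlinarith
  set c0 : ℝ := if 0 ≤ q then (1+a/2)/((1+a/2)*lam - 1) else a/(2*(1+a)) with hc0
  have hc0pos : 0 < c0 := by
    rw [hc0]; split
    · exact div_pos (by linarith) hden
    · positivity
  set term : ℕ → ℝ := fun n => (μ (c.I a n)).toReal ^ q * c.len n ^ β with hterm
  have htermnn : ∀ n, 0 ≤ term n := fun n =>
    mul_nonneg (Real.rpow_nonneg ENNReal.toReal_nonneg q)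
      (Real.rpow_nonneg (c.len_pos n).le β)
  set T : ℝ := ∑' n, term n with hT
  have hTnn : 0 ≤ T := tsum_nonneg htermnn
  set D : ℝ := (lam*c0) ^ (-β) + (1+2*c0) ^ (-β) with hD
  have hDnn : 0 ≤ D := add_nonneg (Real.rpow_nonneg (by positivity) _)
    (Real.rpow_nonneg (by positivity) _)
  set K : ℝ := 2*(c0+1) with hK
  have hKpos : 0 < K := by rw [hK]; linarith
  -- the key estimate
  have key : ∀ R : ℝ, 0 < R → c0 * R ≤ 1 →
      gridSum μ a q R ≤ K * D * T * R ^ (-β) := by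
    intro R hR hR1
    rw [gridSum_eq_sum hF μ hsupp a q hR]
    have hsel : ∀ m ∈ sIdx μ R, ∃ n : ℕ,
        (μ (genl a R m)).toReal ^ q ≤ (μ (c.I a n)).toReal ^ q ∧
        lam * (c0 * R) ≤ c.len n ∧ (m:ℝ)*R - c0*R ≤ c.l n ∧ c.r n ≤ ((m:ℝ)+1)*R + c0*R :=
      fun m hm => selectA c hlam0 hlam1 hlac μ hsupp ha hc0 hR hR1
        (Finset.mem_filter.mp hm).2
    choose! φ hφ1 hφ2 hφ3 hφ4 using hsel
    have hlenu : ∀ m ∈ sIdx μ R, c.len (φ m) ≤ (1+2*c0)*R := by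
      intro m hm
      have h3 := hφ3 m hm
      have h4 := hφ4 m hm
      have : c.len (φ m) = c.r (φ m) - c.l (φ m) := rfl
      rw [this]; nlinarith
    -- pointwise estimate
    have hpoint : ∀ m ∈ sIdx μ R,
        (μ (genl a R m)).toReal ^ q ≤ (D * R ^ (-β)) * term (φ m) := by
      intro m hm
      have hlp : 0 < c.len (φ m) := c.len_pos (φ m)
      have h1 : c.len (φ m) ^ (-β) ≤ D * R ^ (-β) := by
        have hRnn : (0:ℝ) ≤ R ^ (-β) := Real.rpow_nonneg hR.le _
        rcases le_or_gt 0 β with hb | hb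
        · have hll : 0 < lam * (c0 * R) := by positivity
          have e1 : c.len (φ m) ^ (-β) ≤ (lam * (c0 * R)) ^ (-β) :=
            Real.rpow_le_rpow_of_nonpos hll (hφ2 m hm) (by linarith)
          have e2 : (lam * (c0 * R)) ^ (-β) = (lam*c0) ^ (-β) * R ^ (-β) := by
            rw [← mul_assoc, Real.mul_rpow (by positivity) hR.le]
          have e3 : (0:ℝ) ≤ (1+2*c0) ^ (-β) * R ^ (-β) :=
            mul_nonneg (Real.rpow_nonneg (by positivity) _) hRnn
          rw [hD, add_mul]
          linarith [e1.trans_eq e2]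
        · have e1 : c.len (φ m) ^ (-β) ≤ ((1+2*c0) * R) ^ (-β) :=
            Real.rpow_le_rpow hlp.le (hlenu m hm) (by linarith)
          have e2 : ((1+2*c0) * R) ^ (-β) = (1+2*c0) ^ (-β) * R ^ (-β) :=
            Real.mul_rpow (by positivity) hR.le
          have e3 : (0:ℝ) ≤ (lam*c0) ^ (-β) * R ^ (-β) :=
            mul_nonneg (Real.rpow_nonneg (by positivity) _) (Real.rpow_nonneg hR.le _)
          rw [hD, add_mul]
          linarith [e1.trans_eq e2]
      have h2 : (μ (c.I a (φ m))).toReal ^ q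
          = ((μ (c.I a (φ m))).toReal ^ q * c.len (φ m) ^ β) * c.len (φ m) ^ (-β) := by
        rw [mul_assoc, ← Real.rpow_add hlp, add_neg_cancel, Real.rpow_zero, mul_one]
      have hnn : 0 ≤ (μ (c.I a (φ m))).toReal ^ q * c.len (φ m) ^ β := htermnn (φ m)
      calc (μ (genl a R m)).toReal ^ q ≤ (μ (c.I a (φ m))).toReal ^ q := hφ1 m hm
      _ = ((μ (c.I a (φ m))).toReal ^ q * c.len (φ m) ^ β) * c.len (φ m) ^ (-β) := h2
      _ ≤ ((μ (c.I a (φ m))).toReal ^ q * c.len (φ m) ^ β) * (D * R ^ (-β)) :=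
          mul_le_mul_of_nonneg_left h1 hnn
      _ = (D * R ^ (-β)) * term (φ m) := by rw [hterm]; ring
    -- fiber counting
    have hcard : ∀ n ∈ (sIdx μ R).image φ,
        (((sIdx μ R).filter (fun m => φ m = n)).card : ℝ) ≤ K := by
      intro n _
      set t := (sIdx μ R).filter (fun m => φ m = n) with ht
      have hbound := card_mul_le_of_disjoint t (fun m => (m:ℝ)*R) (fun m => ((m:ℝ)+1)*R)
        (cc := R) (A := c.l n - (c0+1)*R) (B := c.l n + (c0+1)*R) ?_ hR ?_ ?_
      · have hmax : max ((c.l n + (c0+1)*R) - (c.l n - (c0+1)*R)) 0 = K*R := by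
          rw [max_eq_left (by nlinarith), hK]; ring
        rw [hmax] at hbound
        exact (mul_le_mul_iff_of_pos_right hR).mp hbound
      · intro i hi j hj hij
        rcases lt_or_gt_of_ne (by exact_mod_cast hij : (i:ℤ) ≠ j) with hlt | hlt
        · apply disjoint_Ioo_of_le
          have h5 : ((i:ℝ)+1) ≤ (j:ℝ) := by exact_mod_cast hlt
          exact mul_le_mul_of_nonneg_right h5 hR.le
        · apply (disjoint_Ioo_of_le _).symm
          have h5 : ((j:ℝ)+1) ≤ (i:ℝ) := by exact_mod_cast hlt
          exact mul_le_mul_of_nonneg_right h5 hR.le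
      · intro i _; exact le_of_eq (by ring)
      · intro i hi
        obtain ⟨hiS, hieq⟩ := Finset.mem_filter.mp hi
        have h3 := hφ3 i hiS
        have h4 := hφ4 i hiS
        rw [hieq] at h3 h4
        intro x hx
        have hx1 : (i:ℝ)*R < x := hx.1
        have hx2 : x < ((i:ℝ)+1)*R := hx.2
        constructor
        · have hrl := c.lt n
          nlinarith
        · nlinarith
    calc ∑ m ∈ sIdx μ R, (μ (genl a R m)).toReal ^ q
        ≤ ∑ m ∈ sIdx μ R, (D * R ^ (-β)) * term (φ m) := Finset.sum_le_sum hpoint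
    _ = (D * R ^ (-β)) * ∑ m ∈ sIdx μ R, term (φ m) := by rw [Finset.mul_sum]
    _ ≤ (D * R ^ (-β)) * (K * T) := by
        apply mul_le_mul_of_nonneg_left _ (mul_nonneg hDnn (Real.rpow_nonneg hR.le _))
        rw [Finset.sum_comp term φ]
        calc ∑ n ∈ (sIdx μ R).image φ, ((sIdx μ R).filter (fun m => φ m = n)).card • term n
            ≤ ∑ n ∈ (sIdx μ R).image φ, K * term n := by
              apply Finset.sum_le_sum
              intro n hn
              rw [nsmul_eq_mul]
              exact mul_le_mul_of_nonneg_right (hcard n hn) (htermnn n)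
        _ = K * ∑ n ∈ (sIdx μ R).image φ, term n := by rw [Finset.mul_sum]
        _ ≤ K * T := mul_le_mul_of_nonneg_left
            (Summable.sum_le_tsum _ (fun n _ => htermnn n) hβ) hKpos.le
    _ = K * D * T * R ^ (-β) := by ring
  -- assemble the limit
  have hr0 : 0 < 1/c0 := by positivity
  have hev : ∀ᶠ R in nhdsWithin 0 (Set.Ioi 0),
      R ^ (β+ε) * gridSum μ a q R ≤ (K * D * T) * R ^ ε := by
    filter_upwards [Ioo_mem_nhdsGT_of_mem (Set.mem_Ico.mpr ⟨le_refl (0:ℝ), hr0⟩)]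
    intro R hR
    obtain ⟨hR0, hRr⟩ := hR
    have hR1 : c0 * R ≤ 1 := by
      rw [← le_div_iff₀' hc0pos]
      exact hRr.le
    have hkey := key R hR0 hR1
    calc R ^ (β+ε) * gridSum μ a q R ≤ R ^ (β+ε) * (K * D * T * R ^ (-β)) :=
        mul_le_mul_of_nonneg_left hkey (Real.rpow_nonneg hR0.le _)
    _ = (K * D * T) * (R ^ (β+ε) * R ^ (-β)) := by ring
    _ = (K * D * T) * R ^ ε := by
        rw [← Real.rpow_add hR0]
        ring_nf
  have hev0 : ∀ᶠ R in nhdsWithin 0 (Set.Ioi 0), 0 ≤ R ^ (β+ε) * gridSum μ a q R := by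
    filter_upwards [self_mem_nhdsWithin]
    intro R hR
    exact mul_nonneg (Real.rpow_nonneg (le_of_lt hR) _) (gridSum_nonneg μ a q R)
  have hlim : Filter.Tendsto (fun R : ℝ => (K * D * T) * R ^ ε)
      (nhdsWithin 0 (Set.Ioi 0)) (nhds 0) := by
    have h1 : Filter.Tendsto (fun R : ℝ => R ^ ε) (nhds 0) (nhds 0) := by
      have := (Real.continuousAt_rpow_const 0 ε (Or.inr hε.le)).tendsto
      rwa [Real.zero_rpow hε.ne'] at this
    have h2 := (h1.mono_left (nhdsWithin_le_nhds : nhdsWithin (0:ℝ) (Set.Ioi 0) ≤ nhds 0)).const_mul (K * D * T)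
    rwa [mul_zero] at h2
  exact squeeze_zero' hev0 hev hlim

end ClaimA

section ClaimB

open MeasureTheory

lemma claimB {F : Set ℝ} (hF : IsFractalSubset F) (c : FractalComplement F)
    {lam : ℝ} (hlam0 : 0 < lam) (hlam1 : lam ≤ 1)
    (μ : Measure ℝ) [IsProbabilityMeasure μ] (hsupp : HasSupport μ F)
    {q a : ℝ} (ha : 2 / lam ≤ a) {β : ℝ}
    (hβ : Filter.Tendsto (fun R => R ^ β * gridSum μ a q R)
      (nhdsWithin 0 (Set.Ioi 0)) (nhds 0))
    {ε : ℝ} (hε : 0 < ε) :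
    Summable (fun n : ℕ => (μ (c.I a n)).toReal ^ q * c.len n ^ (β+ε)) := by
  classical
  have halam : 2 ≤ a * lam := by rw [div_le_iff₀ hlam0] at ha; linarith
  have ha' : (0:ℝ) < a := by nlinarith
  set d1 : ℝ := if 0 ≤ q then 1+4/a else a/(2*(4+a)) with hd1
  set d2 : ℝ := if 0 ≤ q then 2*(1+4/a) else a/(4+a) with hd2
  have hd1pos : 0 < d1 := by rw [hd1]; split <;> positivity
  have hd2pos : 0 < d2 := by rw [hd2]; split <;> positivity
  set f : ℕ → ℝ := fun n => (μ (c.I a n)).toReal ^ q * c.len n ^ (β+ε) with hf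
  have hfnn : ∀ n, 0 ≤ f n := fun n =>
    mul_nonneg (Real.rpow_nonneg ENNReal.toReal_nonneg q)
      (Real.rpow_nonneg (c.len_pos n).le _)
  -- extract a uniform bound near 0
  have hmem : {R : ℝ | R ^ β * gridSum μ a q R < 1} ∈ nhdsWithin 0 (Set.Ioi 0) :=
    hβ (Iio_mem_nhds one_pos)
  obtain ⟨r0, hr0pos, hr0⟩ := mem_nhdsGT_iff_exists_Ioo_subset.mp hmem
  have hr0pos' : (0:ℝ) < r0 := hr0pos
  have H : ∀ R : ℝ, 0 < R → R < r0 → R ^ β * gridSum μ a q R ≤ 1 :=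
    fun R h1 h2 => (hr0 ⟨h1, h2⟩).le
  -- threshold
  set δ0 : ℝ := min (r0/(2*d2)) (a/(a+4)) with hδ0
  have hδ0pos : 0 < δ0 := lt_min (by positivity) (by positivity)
  have hfin := c.finite_big δ0 hδ0pos
  set Fb : Finset ℕ := hfin.toFinset with hFb
  set C1 : ℝ := ∑ n ∈ Fb, f n with hC1
  -- geometric series
  have hhalf : ((1/2:ℝ)) ^ ε < 1 :=
    Real.rpow_lt_one (by norm_num) (by norm_num) hε
  have hhalfnn : (0:ℝ) ≤ (1/2:ℝ) ^ ε := Real.rpow_nonneg (by norm_num) ε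
  have hgeo : Summable (fun k : ℕ => ((1/2:ℝ) ^ ε) ^ k) :=
    summable_geometric_of_lt_one hhalfnn hhalf
  set Cgeo : ℝ := ∑' k : ℕ, ((1/2:ℝ) ^ ε) ^ k with hCgeo
  have hCgeonn : 0 ≤ Cgeo := tsum_nonneg (fun k => pow_nonneg hhalfnn k)
  set D2 : ℝ := (1/d1) ^ (β+ε) + (1/d2) ^ (β+ε) with hD2
  have hD2nn : 0 ≤ D2 := add_nonneg (Real.rpow_nonneg (by positivity) _)
    (Real.rpow_nonneg (by positivity) _)
  set K2 : ℝ := (3/d1 + 1)*d2 with hK2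
  have hK2pos : 0 < K2 := by rw [hK2]; positivity
  have hpowpow : ∀ k : ℕ, ((1/2:ℝ) ^ k) ^ ε = ((1/2:ℝ) ^ ε) ^ k := by
    intro k
    rw [← Real.rpow_natCast (1/2 : ℝ) k, ← Real.rpow_mul (by norm_num), mul_comm,
      Real.rpow_mul (by norm_num), Real.rpow_natCast]
  apply summable_of_sum_le hfnn (c := C1 + D2*K2*Cgeo)
  intro u
  rw [← Finset.sum_filter_add_sum_filter_not u (fun n => δ0 ≤ c.len n) f]
  have hbig : ∑ n ∈ u.filter (fun n => δ0 ≤ c.len n), f n ≤ C1 := by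
    apply Finset.sum_le_sum_of_subset_of_nonneg
    · intro n hn
      rw [hFb, Set.Finite.mem_toFinset]
      exact (Finset.mem_filter.mp hn).2
    · intro n _ _
      exact hfnn n
  set s2 : Finset ℕ := u.filter (fun n => ¬ δ0 ≤ c.len n) with hs2
  have hsmall : ∀ n ∈ s2, (1+4/a) * c.len n ≤ 1 := by
    intro n hn
    have hlt : c.len n < δ0 := not_le.mp (Finset.mem_filter.mp hn).2
    have h1 : c.len n ≤ a/(a+4) := le_trans hlt.le (min_le_right _ _)
    have h2 : (1+4/a) * (a/(a+4)) = 1 := by field_simp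
    calc (1+4/a) * c.len n ≤ (1+4/a) * (a/(a+4)) :=
        mul_le_mul_of_nonneg_left h1 (by positivity)
    _ = 1 := h2
  have hsel : ∀ n ∈ s2, ∃ k : ℕ, ∃ m : ℤ, 0 < μ (gbox ((1/2:ℝ)^k) m) ∧
      (μ (c.I a n)).toReal ^ q ≤ (μ (genl a ((1/2:ℝ)^k) m)).toReal ^ q ∧
      d1 * c.len n ≤ (1/2:ℝ)^k ∧ (1/2:ℝ)^k ≤ d2 * c.len n ∧
      c.l n - c.len n - (1/2:ℝ)^k ≤ (m:ℝ)*((1/2:ℝ)^k) ∧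
      (m:ℝ)*((1/2:ℝ)^k) ≤ c.l n + c.len n :=
    fun n hn => selectB c hlam0 μ hsupp ha hlam1 hd1 hd2 n (hsmall n hn)
  choose! kf mf h1 h2 h3 h4 h5 h6 using hsel
  -- fiberwise over dyadic scales
  rw [← Finset.sum_fiberwise_of_maps_to (s := s2) (t := s2.image kf) (g := kf) (fun n hn => Finset.mem_image_of_mem kf hn) f]
  have hinner : ∀ k ∈ s2.image kf,
      ∑ n ∈ s2.filter (fun n => kf n = k), f n ≤ D2*K2*((1/2:ℝ) ^ ε) ^ k := by
    intro k hk
    set R : ℝ := (1/2:ℝ)^k with hRdef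
    have hR : 0 < R := by positivity
    -- R < r0
    obtain ⟨n0, hn0, hkn0⟩ := Finset.mem_image.mp hk
    have hRr0 : R < r0 := by
      have hlt : c.len n0 < δ0 := not_le.mp (Finset.mem_filter.mp hn0).2
      have := h4 n0 hn0
      rw [hkn0] at this
      have hδr : δ0 ≤ r0/(2*d2) := min_le_left _ _
      calc R ≤ d2 * c.len n0 := this
      _ < d2 * δ0 := by exact mul_lt_mul_of_pos_left hlt hd2pos
      _ ≤ d2 * (r0/(2*d2)) := mul_le_mul_of_nonneg_left hδr hd2pos.le
      _ = r0/2 := by field_simp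
      _ < r0 := by linarith
    set t : Finset ℕ := s2.filter (fun n => kf n = k) with htdef
    have hpoint : ∀ n ∈ t, f n ≤ D2 * R ^ (β+ε) * (μ (genl a R (mf n))).toReal ^ q := by
      intro n hn
      obtain ⟨hns2, hkeq⟩ := Finset.mem_filter.mp hn
      have hlp : 0 < c.len n := c.len_pos n
      have hup : c.len n ≤ R/d1 := by
        have := h3 n hns2; rw [hkeq] at this
        rw [le_div_iff₀ hd1pos]; linarith [this]
      have hlo : R/d2 ≤ c.len n := by
        have := h4 n hns2; rw [hkeq] at this
        rw [div_le_iff₀ hd2pos]; linarith [this]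
      have hlen : c.len n ^ (β+ε) ≤ D2 * R ^ (β+ε) := by
        have hRnn : (0:ℝ) ≤ R ^ (β+ε) := Real.rpow_nonneg hR.le _
        rcases le_or_gt 0 (β+ε) with hb | hb
        · have e1 : c.len n ^ (β+ε) ≤ (R/d1) ^ (β+ε) :=
            Real.rpow_le_rpow hlp.le hup hb
          have e2 : (R/d1) ^ (β+ε) = (1/d1) ^ (β+ε) * R ^ (β+ε) := by
            rw [← Real.mul_rpow (by positivity) hR.le]
            congr 1
            field_simp
          have e3 : (0:ℝ) ≤ (1/d2) ^ (β+ε) * R ^ (β+ε) :=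
            mul_nonneg (Real.rpow_nonneg (by positivity) _) hRnn
          rw [hD2, add_mul]
          linarith [e1.trans_eq e2]
        · have e1 : c.len n ^ (β+ε) ≤ (R/d2) ^ (β+ε) :=
            Real.rpow_le_rpow_of_nonpos (by positivity) hlo hb.le
          have e2 : (R/d2) ^ (β+ε) = (1/d2) ^ (β+ε) * R ^ (β+ε) := by
            rw [← Real.mul_rpow (by positivity) hR.le]
            congr 1
            field_simp
          have e3 : (0:ℝ) ≤ (1/d1) ^ (β+ε) * R ^ (β+ε) :=
            mul_nonneg (Real.rpow_nonneg (by positivity) _) hRnn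
          rw [hD2, add_mul]
          linarith [e1.trans_eq e2]
      have h2' := h2 n hns2
      rw [hkeq] at h2'
      calc f n = (μ (c.I a n)).toReal ^ q * c.len n ^ (β+ε) := rfl
      _ ≤ (μ (genl a R (mf n))).toReal ^ q * (D2 * R ^ (β+ε)) :=
          mul_le_mul h2' hlen (Real.rpow_nonneg (c.len_pos n).le _)
            (Real.rpow_nonneg ENNReal.toReal_nonneg q)
      _ = D2 * R ^ (β+ε) * (μ (genl a R (mf n))).toReal ^ q := by ring
    have hgroup : ∑ n ∈ t, (μ (genl a R (mf n))).toReal ^ q ≤ K2 * gridSum μ a q R := by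
      rw [Finset.sum_comp (fun m => (μ (genl a R m)).toReal ^ q) mf]
      have hcard : ∀ m ∈ t.image mf,
          ((t.filter (fun n => mf n = m)).card : ℝ) ≤ K2 := by
        intro m _
        set t' := t.filter (fun n => mf n = m) with ht'
        have hcc : (0:ℝ) < R/d2 := by positivity
        have hbound := card_mul_le_of_disjoint t' c.l c.r (cc := R/d2)
          (A := (m:ℝ)*R - R/d1) (B := (m:ℝ)*R + 2*(R/d1) + R) ?_ hcc ?_ ?_
        · have hmax : max (((m:ℝ)*R + 2*(R/d1) + R) - ((m:ℝ)*R - R/d1)) 0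
              = K2 * (R/d2) := by
            have hRd1 : (0:ℝ) < R/d1 := by positivity
            rw [max_eq_left (by linarith)]
            rw [hK2]
            field_simp
            ring
          rw [hmax] at hbound
          exact (mul_le_mul_iff_of_pos_right hcc).mp hbound
        · intro i hi j hj hij
          exact c.disj hij
        · intro n hn
          obtain ⟨hnt, _⟩ := Finset.mem_filter.mp hn
          obtain ⟨hns2, hkeq⟩ := Finset.mem_filter.mp hnt
          have := h4 n hns2; rw [hkeq] at this
          have hd : R/d2 ≤ c.len n := by rw [div_le_iff₀ hd2pos]; linarith
          exact hd
        · intro n hn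
          obtain ⟨hnt, hmeq⟩ := Finset.mem_filter.mp hn
          obtain ⟨hns2, hkeq⟩ := Finset.mem_filter.mp hnt
          have h5' := h5 n hns2
          have h6' := h6 n hns2
          have h3' := h3 n hns2
          rw [hkeq] at h5' h6' h3'
          rw [hmeq] at h5' h6'
          have hup : c.len n ≤ R/d1 := by rw [le_div_iff₀ hd1pos]; linarith [h3']
          have hlE : c.len n = c.r n - c.l n := rfl
          have L5 : c.l n - (c.r n - c.l n) - R ≤ (m:ℝ)*R := hlE ▸ h5'
          have L6 : (m:ℝ)*R ≤ c.l n + (c.r n - c.l n) := hlE ▸ h6'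
          have hup' : c.r n - c.l n ≤ R/d1 := hlE ▸ hup
          intro x hx
          obtain ⟨hx1, hx2⟩ := hx
          constructor
          · linarith
          · linarith
      calc ∑ m ∈ t.image mf, (t.filter (fun n => mf n = m)).card • (μ (genl a R m)).toReal ^ q
          ≤ ∑ m ∈ t.image mf, K2 * (μ (genl a R m)).toReal ^ q := by
            apply Finset.sum_le_sum
            intro m hm
            rw [nsmul_eq_mul]
            exact mul_le_mul_of_nonneg_right (hcard m hm)
              (Real.rpow_nonneg ENNReal.toReal_nonneg q)
      _ = K2 * ∑ m ∈ t.image mf, (μ (genl a R m)).toReal ^ q := by rw [Finset.mul_sum]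
      _ ≤ K2 * gridSum μ a q R := by
          apply mul_le_mul_of_nonneg_left _ hK2pos.le
          apply sum_le_gridSum hF μ hsupp a q hR
          intro m hm
          obtain ⟨n, hn, hmeq⟩ := Finset.mem_image.mp hm
          obtain ⟨hns2, hkeq⟩ := Finset.mem_filter.mp hn
          have := h1 n hns2
          rw [hkeq, hmeq] at this
          exact this
    calc ∑ n ∈ t, f n ≤ ∑ n ∈ t, D2 * R ^ (β+ε) * (μ (genl a R (mf n))).toReal ^ q :=
        Finset.sum_le_sum hpoint
    _ = D2 * R ^ (β+ε) * ∑ n ∈ t, (μ (genl a R (mf n))).toReal ^ q := by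
        rw [Finset.mul_sum]
    _ ≤ D2 * R ^ (β+ε) * (K2 * gridSum μ a q R) := by
        apply mul_le_mul_of_nonneg_left hgroup
        exact mul_nonneg hD2nn (Real.rpow_nonneg hR.le _)
    _ = D2 * K2 * (R ^ ε * (R ^ β * gridSum μ a q R)) := by
        rw [Real.rpow_add hR]
        ring
    _ ≤ D2 * K2 * (R ^ ε * 1) := by
        apply mul_le_mul_of_nonneg_left _ (mul_nonneg hD2nn hK2pos.le)
        exact mul_le_mul_of_nonneg_left (H R hR hRr0) (Real.rpow_nonneg hR.le _)
    _ = D2 * K2 * ((1/2:ℝ) ^ ε) ^ k := by rw [mul_one, hRdef, hpowpow k]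
  refine le_trans (add_le_add hbig (Finset.sum_le_sum hinner)) ?_
  apply add_le_add le_rfl
  calc ∑ k ∈ s2.image kf, D2*K2*((1/2:ℝ) ^ ε) ^ k
          = D2*K2 * ∑ k ∈ s2.image kf, ((1/2:ℝ) ^ ε) ^ k := by rw [Finset.mul_sum]
      _ ≤ D2*K2*Cgeo := by
          apply mul_le_mul_of_nonneg_left _ (mul_nonneg hD2nn hK2pos.le)
          exact Summable.sum_le_tsum _ (fun k _ => pow_nonneg hhalfnn k) hgeo

end ClaimB

section BddBelowA

open MeasureTheory

lemma grid_lower {F : Set ℝ} (hF : IsFractalSubset F) (μ : Measure ℝ)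
    [IsProbabilityMeasure μ] (hsupp : HasSupport μ F) {R : ℝ} (h0 : 0 < R) (h2 : R ≤ 1/2) :
    ∃ m : ℤ, R/4 ≤ (μ (gbox R m)).toReal := by
  classical
  have hzero : ∀ m ∉ sIdx μ R, μ (gbox R m) = 0 := by
    intro m hm
    by_contra h
    exact hm (Finset.mem_filter.mpr ⟨box_index_bound hF μ hsupp h0 (pos_iff_ne_zero.mpr h),
      pos_iff_ne_zero.mpr h⟩)
  have hcover : (Set.univ : Set ℝ) ⊆ ⋃ m : ℤ, gbox R m :=
    fun y _ => Set.mem_iUnion.mpr ⟨⌊y/R⌋, mem_gbox h0 y⟩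
  have h1 : (1:ENNReal) ≤ ∑ m ∈ sIdx μ R, μ (gbox R m) := by
    calc (1:ENNReal) = μ Set.univ := measure_univ.symm
    _ ≤ μ (⋃ m : ℤ, gbox R m) := measure_mono hcover
    _ ≤ ∑' m : ℤ, μ (gbox R m) := measure_iUnion_le _
    _ = ∑ m ∈ sIdx μ R, μ (gbox R m) := tsum_eq_sum hzero
  have hsumfin : ∀ m ∈ sIdx μ R, μ (gbox R m) ≠ ⊤ := fun m _ => measure_ne_top μ _
  have h1' : (1:ℝ) ≤ ∑ m ∈ sIdx μ R, (μ (gbox R m)).toReal := by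
    have := ENNReal.toReal_mono (ENNReal.sum_ne_top.mpr hsumfin) h1
    rwa [ENNReal.toReal_one, ENNReal.toReal_sum hsumfin] at this
  by_contra hc
  push_neg at hc
  have hne : (sIdx μ R).Nonempty := by
    rcases Finset.eq_empty_or_nonempty (sIdx μ R) with he | hne
    · rw [he, Finset.sum_empty] at h1'; linarith
    · exact hne
  have hlt : ∑ m ∈ sIdx μ R, (μ (gbox R m)).toReal
      < ∑ _m ∈ sIdx μ R, R/4 :=
    Finset.sum_lt_sum_of_nonempty hne (fun m _ => hc m)
  rw [Finset.sum_const, nsmul_eq_mul] at hlt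
  have hcard : ((sIdx μ R).card : ℝ) ≤ 1/R + 2 := by
    have hsub : (sIdx μ R).card ≤ (Finset.Icc (-1:ℤ) ⌊1/R⌋).card :=
      Finset.card_filter_le _ _
    rw [Int.card_Icc] at hsub
    have hfl : (0:ℤ) ≤ ⌊1/R⌋ := Int.floor_nonneg.mpr (by positivity)
    have hnn : (0:ℤ) ≤ ⌊1/R⌋ + 1 - (-1) := by omega
    have e2 : ((⌊1/R⌋ + 1 - (-1)).toNat : ℤ) = ⌊1/R⌋ + 1 - (-1) := Int.toNat_of_nonneg hnn
    have e3 : ((⌊1/R⌋ + 1 - (-1)).toNat : ℝ) = ((⌊1/R⌋ + 1 - (-1) : ℤ) : ℝ) := by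
      exact_mod_cast congrArg (fun z : ℤ => (z : ℝ)) e2
    have : ((⌊1/R⌋ + 1 - (-1)).toNat : ℝ) = ((⌊1/R⌋:ℝ) + 2) := by
      rw [e3]; push_cast; ring
    calc ((sIdx μ R).card : ℝ) ≤ (((⌊1/R⌋ + 1 - (-1)).toNat : ℕ) : ℝ) := by exact_mod_cast hsub
    _ = (⌊1/R⌋:ℝ) + 2 := this
    _ ≤ 1/R + 2 := by linarith [Int.floor_le (1/R)]
  have hR2 : (2:ℝ) ≤ 1/R := by
    rw [le_div_iff₀ h0]; linarith
  have hstep : ((sIdx μ R).card : ℝ) * (R/4) ≤ (1/R + 2) * (R/4) :=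
    mul_le_mul_of_nonneg_right hcard (by positivity)
  have heq : (1/R + 2) * (R/4) = 1/4 + R/2 := by field_simp; ring
  linarith [hlt]

lemma bddA {F : Set ℝ} (hF : IsFractalSubset F) (μ : Measure ℝ)
    [IsProbabilityMeasure μ] (hsupp : HasSupport μ F) {a : ℝ} (q : ℝ) (ha : 0 ≤ a) :
    BddBelow {β : ℝ | Filter.Tendsto (fun R => R ^ β * gridSum μ a q R)
      (nhdsWithin 0 (Set.Ioi 0)) (nhds 0)} := by
  classical
  refine ⟨min (-q) 0, fun β hβ => ?_⟩
  by_contra hcon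
  push_neg at hcon
  have hβq : β < -q := lt_of_lt_of_le hcon (min_le_left _ _)
  have hβ0 : β < 0 := lt_of_lt_of_le hcon (min_le_right _ _)
  -- a uniform positive lower bound for R^β * gridSum
  set c0 : ℝ := if 0 ≤ q then (4:ℝ) ^ (-q) else 1 with hc0
  have hc0pos : 0 < c0 := by
    rw [hc0]; split
    · exact Real.rpow_pos_of_pos (by norm_num) _
    · norm_num
  have hev : ∀ᶠ R in nhdsWithin (0:ℝ) (Set.Ioi 0),
      c0 ≤ R ^ β * gridSum μ a q R := by
    filter_upwards [Ioo_mem_nhdsGT_of_mem (Set.mem_Ico.mpr ⟨le_refl (0:ℝ), (by norm_num : (0:ℝ) < 1/2)⟩)]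
    intro R hR
    obtain ⟨hR0, hR2⟩ := hR
    obtain ⟨m, hm⟩ := grid_lower hF μ hsupp hR0 hR2.le
    have hmpos : 0 < μ (gbox R m) := by
      rw [pos_iff_ne_zero]
      intro hz
      rw [hz] at hm
      simp at hm
      linarith
    have hmS : m ∈ sIdx μ R :=
      Finset.mem_filter.mpr ⟨box_index_bound hF μ hsupp hR0 hmpos, hmpos⟩
    have hgenl : R/4 ≤ (μ (genl a R m)).toReal :=
      le_trans hm (ENNReal.toReal_mono (measure_ne_top μ _)
        (measure_mono (gbox_subset_genl ha hR0.le m)))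
    have hgenl1 : (μ (genl a R m)).toReal ≤ 1 := by
      have := ENNReal.toReal_mono (measure_ne_top μ Set.univ)
        (measure_mono (Set.subset_univ (genl a R m)))
      rwa [measure_univ, ENNReal.toReal_one] at this
    have hsingle : (μ (genl a R m)).toReal ^ q ≤ gridSum μ a q R := by
      rw [gridSum_eq_sum hF μ hsupp a q hR0]
      exact Finset.single_le_sum (f := fun m : ℤ => (μ (genl a R m)).toReal ^ q)
        (fun i _ => Real.rpow_nonneg ENNReal.toReal_nonneg q) hmS
    have hRβ : (1:ℝ) ≤ R ^ β :=
      Real.one_le_rpow_of_pos_of_le_one_of_nonpos hR0 (by linarith) hβ0.le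
    rcases le_or_gt 0 q with hq | hq
    · rw [hc0, if_pos hq]
      have hG : (R/4) ^ q ≤ gridSum μ a q R :=
        le_trans (Real.rpow_le_rpow (by positivity) hgenl hq) hsingle
      have hcalc : R ^ β * (R/4) ^ q = R ^ (β+q) * (4:ℝ) ^ (-q) := by
        rw [Real.div_rpow hR0.le (by norm_num : (0:ℝ) ≤ 4), Real.rpow_add hR0,
          Real.rpow_neg (by norm_num : (0:ℝ) ≤ 4)]
        field_simp
      have hRβq : (1:ℝ) ≤ R ^ (β+q) :=
        Real.one_le_rpow_of_pos_of_le_one_of_nonpos hR0 (by linarith) (by linarith)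
      calc (4:ℝ) ^ (-q) = 1 * (4:ℝ) ^ (-q) := (one_mul _).symm
      _ ≤ R ^ (β+q) * (4:ℝ) ^ (-q) := mul_le_mul_of_nonneg_right hRβq
          (Real.rpow_nonneg (by norm_num) _)
      _ = R ^ β * (R/4) ^ q := hcalc.symm
      _ ≤ R ^ β * gridSum μ a q R := mul_le_mul_of_nonneg_left hG
          (Real.rpow_nonneg hR0.le _)
    · rw [hc0, if_neg (not_le.mpr hq)]
      have hpos' : 0 < (μ (genl a R m)).toReal := by linarith
      have hG : (1:ℝ) ≤ gridSum μ a q R :=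
        le_trans (Real.one_le_rpow_of_pos_of_le_one_of_nonpos hpos' hgenl1 hq.le) hsingle
      calc (1:ℝ) = 1 * 1 := (one_mul 1).symm
      _ ≤ R ^ β * gridSum μ a q R := mul_le_mul hRβ hG (by norm_num)
          (Real.rpow_nonneg hR0.le _)
  have := ge_of_tendsto hβ hev
  linarith

end BddBelowA

/-- the moment function `β(q)` equals the abscissa of convergence of the
series `Σ_n μ(Ī_n^a)^q |I_n|^β` (equation (beta1) of Proposition 4.4). -/
theorem stmt_11 (F : Set ℝ) (hF : IsFractalSubset F) (c : FractalComplement F)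
    (lam : ℝ) (hlam0 : 0 < lam) (hlam1 : lam ≤ 1) (hlac : Lacunary c lam)
    (μ : Measure ℝ) [IsProbabilityMeasure μ] [NullSingletonClass μ] (hsupp : HasSupport μ F)
    (q a : ℝ) (ha : 2 / lam ≤ a) :
    betaA μ a q =
      sInf {β : ℝ | Summable (fun n : ℕ => (μ (c.I a n)).toReal ^ q * c.len n ^ β)} := by
  classical
  have halam : 2 ≤ a * lam := by rw [div_le_iff₀ hlam0] at ha; linarith
  have ha' : (0:ℝ) < a := by nlinarith
  set SA : Set ℝ := {β : ℝ | Filter.Tendsto (fun R => R ^ β * gridSum μ a q R)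
    (nhdsWithin 0 (Set.Ioi 0)) (nhds 0)} with hSA
  set SB : Set ℝ := {β : ℝ | Summable (fun n : ℕ => (μ (c.I a n)).toReal ^ q * c.len n ^ β)}
    with hSB
  have hbetaA : betaA μ a q = sInf SA := rfl
  rw [hbetaA]
  have hAB : ∀ β ∈ SB, ∀ ε : ℝ, 0 < ε → β + ε ∈ SA := by
    intro β hβ ε hε
    exact claimA hF c hlam0 hlam1 hlac μ hsupp ha hβ hε
  have hBA : ∀ β ∈ SA, ∀ ε : ℝ, 0 < ε → β + ε ∈ SB := by
    intro β hβ ε hε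
    exact claimB hF c hlam0 hlam1 μ hsupp ha hβ hε
  have hbddA : BddBelow SA := bddA hF μ hsupp q ha'.le
  by_cases hSAne : SA.Nonempty
  · have hSBne : SB.Nonempty := by
      obtain ⟨β, hβ⟩ := hSAne
      exact ⟨β + 1, hBA β hβ 1 one_pos⟩
    have hbddB : BddBelow SB := by
      obtain ⟨b, hb⟩ := hbddA
      refine ⟨b - 1, fun β hβ => ?_⟩
      have := hb (hAB β hβ 1 one_pos)
      linarith
    apply le_antisymm
    · apply le_csInf hSBne
      intro β hβ
      apply le_of_forall_pos_le_add
      intro ε hε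
      exact csInf_le hbddA (hAB β hβ ε hε)
    · apply le_csInf hSAne
      intro β hβ
      apply le_of_forall_pos_le_add
      intro ε hε
      exact csInf_le hbddB (hBA β hβ ε hε)
  · have hSBne : ¬ SB.Nonempty := by
      intro ⟨β, hβ⟩
      exact hSAne ⟨β + 1, hAB β hβ 1 one_pos⟩
    rw [Set.not_nonempty_iff_eq_empty.mp hSAne, Set.not_nonempty_iff_eq_empty.mp hSBne]
end
end

section
/- Let (c_n)_{n≥1} be a sequence of nonnegative reals and (ℓ_n)_{n≥1} a nonincreasing sequence with 0 < ℓ_n ≤ 1 and Σ_{n=1}^∞ ℓ_n ≤ 1. If there is a constant C such that Σ_{n=1}^N c_n ≤ C log N for all N ≥ 2, then for every ε > 0 the series Σ_{n=1}^∞ c_n ℓ_n^ε converges. -/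
open MeasureTheory Filter Set
open scoped Classical

noncomputable section

/-- summability lemma. If the partial sums of the nonnegative `c_n` grow at
most logarithmically and `(ℓ_n)` is nonincreasing with `0 < ℓ_n ≤ 1` and `Σ ℓ_n ≤ 1`,
then `Σ c_n ℓ_n^ε` converges for every `ε > 0`. -/
theorem stmt_13 (cs ls : ℕ → ℝ) (hcs : ∀ n, 0 ≤ cs n)
    (hls0 : ∀ n, 0 < ls n) (hls1 : ∀ n, ls n ≤ 1) (hmono : ∀ n, ls (n + 1) ≤ ls n)
    (hsummable : Summable ls) (hsum : ∑' n, ls n ≤ 1)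
    (C : ℝ) (hC : ∀ N : ℕ, 2 ≤ N → ∑ n ∈ Finset.range N, cs n ≤ C * Real.log N) :
    ∀ ε : ℝ, 0 < ε → Summable (fun n => cs n * ls n ^ ε) := by
  intro ε hε
  have hanti : Antitone ls := antitone_nat_of_succ_le hmono
  -- ls n ≤ 1/(n+1)
  have hln : ∀ n : ℕ, ls n ≤ 1 / ((n : ℝ) + 1) := by
    intro n
    have h1 : ((n : ℝ) + 1) * ls n ≤ ∑ k ∈ Finset.range (n + 1), ls k := by
      calc ((n : ℝ) + 1) * ls n = ∑ _k ∈ Finset.range (n + 1), ls n := by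
            rw [Finset.sum_const, Finset.card_range]; push_cast; ring
        _ ≤ ∑ k ∈ Finset.range (n + 1), ls k :=
            Finset.sum_le_sum fun k hk =>
              hanti (Nat.lt_succ_iff.mp (Finset.mem_range.mp hk))
    have h2 : ∑ k ∈ Finset.range (n + 1), ls k ≤ 1 :=
      le_trans (Summable.sum_le_tsum _ (fun k _ => (hls0 k).le) hsummable) hsum
    have hpos : (0 : ℝ) < (n : ℝ) + 1 := by positivity
    rw [le_div_iff₀ hpos]
    nlinarith
  have hC0 : 0 ≤ C := by
    have h2 := hC 2 le_rfl
    have hlog : 0 < Real.log 2 := Real.log_pos (by norm_num)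
    have hs : (0 : ℝ) ≤ ∑ n ∈ Finset.range 2, cs n :=
      Finset.sum_nonneg fun n _ => hcs n
    push_cast at h2
    nlinarith
  set r : ℝ := (2 : ℝ) ^ (-ε) with hr
  have hr0 : 0 < r := Real.rpow_pos_of_pos (by norm_num) _
  have hr1 : r < 1 :=
    Real.rpow_lt_one_of_one_lt_of_neg (by norm_num) (by linarith)
  -- key pointwise bound on blocks
  have hlr : ∀ K n : ℕ, 2 ^ K ≤ n → ls n ^ ε ≤ r ^ K := by
    intro K n hn
    have h2K : (0 : ℝ) < (2 : ℝ) ^ K := by positivity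
    have h1 : ls n ≤ ((2 : ℝ) ^ K)⁻¹ := by
      have hle : (2 : ℝ) ^ K ≤ (n : ℝ) + 1 := by
        have : ((2 ^ K : ℕ) : ℝ) ≤ (n : ℝ) := by exact_mod_cast hn
        push_cast at this ⊢
        linarith
      calc ls n ≤ 1 / ((n : ℝ) + 1) := hln n
        _ ≤ ((2 : ℝ) ^ K)⁻¹ := by
            rw [one_div]
            exact inv_anti₀ h2K hle
    have h2 : ls n ^ ε ≤ (((2 : ℝ) ^ K)⁻¹) ^ ε :=
      Real.rpow_le_rpow (hls0 n).le h1 hε.le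
    refine h2.trans_eq ?_
    rw [← Real.rpow_natCast (2 : ℝ) K, ← Real.rpow_neg_one,
      ← Real.rpow_natCast r K, hr, ← Real.rpow_mul (by norm_num),
      ← Real.rpow_mul (by norm_num), ← Real.rpow_mul (by norm_num)]
    ring_nf
  -- main induction over dyadic blocks
  have hmain : ∀ K : ℕ, ∑ n ∈ Finset.range (2 ^ K), cs n * ls n ^ ε ≤
      cs 0 * ls 0 ^ ε + C * Real.log 2 * ∑ k ∈ Finset.range K, ((k : ℝ) + 1) * r ^ k := by
    intro K
    induction K with
    | zero => simp
    | succ K ih =>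
      have hsplit : ∑ n ∈ Finset.range (2 ^ (K + 1)), cs n * ls n ^ ε =
          ∑ n ∈ Finset.range (2 ^ K), cs n * ls n ^ ε +
          ∑ n ∈ Finset.Ico (2 ^ K) (2 ^ (K + 1)), cs n * ls n ^ ε := by
        rw [Finset.range_eq_Ico,
          ← Finset.sum_Ico_consecutive _ (Nat.zero_le (2 ^ K))
            (Nat.pow_le_pow_right (by norm_num) (Nat.le_succ K)), Finset.range_eq_Ico]
      have hblock : ∑ n ∈ Finset.Ico (2 ^ K) (2 ^ (K + 1)), cs n * ls n ^ ε ≤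
          C * Real.log 2 * (((K : ℝ) + 1) * r ^ K) := by
        have h1 : ∑ n ∈ Finset.Ico (2 ^ K) (2 ^ (K + 1)), cs n * ls n ^ ε ≤
            ∑ n ∈ Finset.Ico (2 ^ K) (2 ^ (K + 1)), cs n * r ^ K :=
          Finset.sum_le_sum fun n hn =>
            mul_le_mul_of_nonneg_left (hlr K n (Finset.mem_Ico.mp hn).1) (hcs n)
        have h3 : ∑ n ∈ Finset.Ico (2 ^ K) (2 ^ (K + 1)), cs n ≤
            ∑ n ∈ Finset.range (2 ^ (K + 1)), cs n := by
          rw [Finset.range_eq_Ico]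
          exact Finset.sum_le_sum_of_subset_of_nonneg
            (Finset.Ico_subset_Ico (Nat.zero_le _) le_rfl) (fun i _ _ => hcs i)
        have h2le : 2 ≤ 2 ^ (K + 1) := by
          calc 2 = 2 ^ 1 := by norm_num
            _ ≤ 2 ^ (K + 1) := Nat.pow_le_pow_right (by norm_num) (by omega)
        have h4 := hC (2 ^ (K + 1)) h2le
        have h5 : Real.log ((2 ^ (K + 1) : ℕ) : ℝ) = ((K : ℝ) + 1) * Real.log 2 := by
          push_cast
          rw [Real.log_pow]
          push_cast
          ring
        rw [h5] at h4
        have hrK : (0 : ℝ) ≤ r ^ K := (pow_pos hr0 K).le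
        calc ∑ n ∈ Finset.Ico (2 ^ K) (2 ^ (K + 1)), cs n * ls n ^ ε
            ≤ ∑ n ∈ Finset.Ico (2 ^ K) (2 ^ (K + 1)), cs n * r ^ K := h1
          _ = (∑ n ∈ Finset.Ico (2 ^ K) (2 ^ (K + 1)), cs n) * r ^ K := by
              rw [Finset.sum_mul]
          _ ≤ (C * (((K : ℝ) + 1) * Real.log 2)) * r ^ K := by
              apply mul_le_mul_of_nonneg_right _ hrK
              exact h3.trans h4
          _ = C * Real.log 2 * (((K : ℝ) + 1) * r ^ K) := by ring
      rw [hsplit, Finset.sum_range_succ, mul_add]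
      linarith
  -- summable bound series
  have hT : Summable (fun k : ℕ => ((k : ℝ) + 1) * r ^ k) := by
    have hnorm : ‖r‖ < 1 := by rwa [Real.norm_eq_abs, abs_of_pos hr0]
    have h1 : Summable (fun k : ℕ => (k : ℝ) ^ 1 * r ^ k) :=
      summable_pow_mul_geometric_of_norm_lt_one 1 hnorm
    have h2 : Summable (fun k : ℕ => r ^ k) := summable_geometric_of_lt_one hr0.le hr1
    have := h1.add h2
    refine this.congr fun k => ?_
    push_cast
    ring
  have hTnn : ∀ k : ℕ, 0 ≤ ((k : ℝ) + 1) * r ^ k := fun k =>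
    mul_nonneg (by positivity) (pow_pos hr0 k).le
  set T : ℝ := ∑' k : ℕ, ((k : ℝ) + 1) * r ^ k with hTdef
  have hClog : 0 ≤ C * Real.log 2 :=
    mul_nonneg hC0 (Real.log_nonneg (by norm_num))
  apply summable_of_sum_range_le (c := cs 0 * ls 0 ^ ε + C * Real.log 2 * T)
  · intro n
    exact mul_nonneg (hcs n) (Real.rpow_nonneg (hls0 n).le ε)
  · intro N
    have hN : N ≤ 2 ^ N := Nat.le_of_lt (Nat.lt_two_pow_self (n := N))
    calc ∑ n ∈ Finset.range N, cs n * ls n ^ ε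
        ≤ ∑ n ∈ Finset.range (2 ^ N), cs n * ls n ^ ε :=
          Finset.sum_le_sum_of_subset_of_nonneg
            (Finset.range_subset_range.mpr hN)
            (fun i _ _ => mul_nonneg (hcs i) (Real.rpow_nonneg (hls0 i).le ε))
      _ ≤ cs 0 * ls 0 ^ ε + C * Real.log 2 * ∑ k ∈ Finset.range N, ((k : ℝ) + 1) * r ^ k :=
          hmain N
      _ ≤ cs 0 * ls 0 ^ ε + C * Real.log 2 * T := by
          gcongr
          rw [hTdef]
          exact Summable.sum_le_tsum _ (fun k _ => hTnn k) hT
end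
end

section
/- Let F be a fractal subset of [0,1] satisfying the lacunarity condition with constant λ ∈ (0,1], and let μ be a non-atomic Borel probability measure with topological support exactly F satisfying the density condition: there exist 0 < c₁ ≤ c₂ < ∞ and ρ > 0 such that r^{c₂} ≤ μ([x−r, x+r]) ≤ r^{c₁} for all x ∈ F and 0 < r ≤ ρ. Then for every a ≥ 2/λ there exist constants 0 < c₃ ≤ c₄ < ∞ and N₀ such that n^{−c₄} ≤ μ(Ī_n^a) ≤ n^{−c₃} for all n ≥ N₀. -/
open MeasureTheory Filter Set
open scoped Classical

noncomputable section

set_option maxHeartbeats 2000000 in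
/-- under the lacunarity and density conditions, the measures of the
enlarged complementary intervals satisfy polynomial bounds `n^{-c₄} ≤ μ(Ī_n^a) ≤ n^{-c₃}`
(equation (gdensity) in the proof of Theorem 4.5). -/
theorem stmt_14 (F : Set ℝ) (hF : IsFractalSubset F) (c : FractalComplement F)
    (lam : ℝ) (hlam0 : 0 < lam) (hlam1 : lam ≤ 1) (hlac : Lacunary c lam)
    (μ : Measure ℝ) [IsProbabilityMeasure μ] [NullSingletonClass μ] (hsupp : HasSupport μ F)
    (c₁ c₂ ρ : ℝ) (hc₁ : 0 < c₁) (hc₁₂ : c₁ ≤ c₂) (hρ : 0 < ρ)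
    (hdens : ∀ x ∈ F, ∀ R : ℝ, 0 < R → R ≤ ρ →
      R ^ c₂ ≤ (μ (Set.Icc (x - R) (x + R))).toReal ∧
      (μ (Set.Icc (x - R) (x + R))).toReal ≤ R ^ c₁)
    (a : ℝ) (ha : 2 / lam ≤ a) :
    ∃ c₃ c₄ : ℝ, ∃ N₀ : ℕ, 0 < c₃ ∧ c₃ ≤ c₄ ∧ ∀ n : ℕ, N₀ ≤ n →
      (n : ℝ) ^ (-c₄) ≤ (μ (c.I a n)).toReal ∧
      (μ (c.I a n)).toReal ≤ (n : ℝ) ^ (-c₃) := by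
  -- basic facts
  have hc₂ : 0 < c₂ := lt_of_lt_of_le hc₁ hc₁₂
  have ha2 : (2:ℝ) ≤ a * lam := by
    rw [div_le_iff₀ hlam0] at ha; linarith
  have ha0 : (0:ℝ) < a := by nlinarith
  have hlen_pos : ∀ m, 0 < c.len m := fun m => sub_pos.2 (c.lt m)
  have hanti : Antitone c.len := antitone_nat_of_succ_le c.mono
  have hIoo_sub : ∀ m, Set.Ioo (c.l m) (c.r m) ⊆ Set.Icc 0 1 \ F := by
    intro m; rw [← c.union]; exact Set.subset_iUnion (fun n => Set.Ioo (c.l n) (c.r n)) m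
  have hIcc_sub : ∀ m, Set.Icc (c.l m) (c.r m) ⊆ Set.Icc (0:ℝ) 1 := by
    intro m
    rw [← closure_Ioo (c.lt m).ne]
    exact closure_minimal ((hIoo_sub m).trans diff_subset) isClosed_Icc
  have hμF : μ F = 1 := by
    have h := MeasureTheory.measure_add_measure_compl (μ := μ) hF.1.isClosed.measurableSet
    rw [hsupp.1, add_zero] at h
    simpa using h
  have hμIcc0 : ∀ m, μ (Set.Icc (c.l m) (c.r m)) = 0 := by
    intro m
    rw [← measure_congr (MeasureTheory.Ioo_ae_eq_Icc (μ := μ))]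
    exact MeasureTheory.measure_mono_null (fun x hx => ((hIoo_sub m) hx).2) hsupp.1
  -- endpoints in F
  have hendF : ∀ m, c.l m ∈ F ∧ c.r m ∈ F := by
    intro m
    constructor
    · by_contra h
      have hl01 : c.l m ∈ Set.Icc (0:ℝ) 1 := hIcc_sub m ⟨le_refl _, (c.lt m).le⟩
      have : c.l m ∈ ⋃ n, Set.Ioo (c.l n) (c.r n) := by rw [c.union]; exact ⟨hl01, h⟩
      obtain ⟨k, hk⟩ := Set.mem_iUnion.1 this
      have hkm : k ≠ m := by rintro rfl; exact lt_irrefl _ hk.1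
      set y := (c.l m + min (c.r m) (c.r k)) / 2 with hy
      have h1 : c.l m < y := by
        have := c.lt m; have := hk.2
        simp only [hy]; rcases min_cases (c.r m) (c.r k) with ⟨h', _⟩|⟨h', _⟩ <;> rw [h'] <;> linarith
      have h2 : y < min (c.r m) (c.r k) := by
        have := c.lt m; have := hk.2
        simp only [hy]; rcases min_cases (c.r m) (c.r k) with ⟨h', _⟩|⟨h', _⟩ <;> rw [h'] <;> linarith
      exact (c.disj hkm).ne_of_mem ⟨hk.1.trans h1, h2.trans_le (min_le_right _ _)⟩
        ⟨h1, h2.trans_le (min_le_left _ _)⟩ rfl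
    · by_contra h
      have hr01 : c.r m ∈ Set.Icc (0:ℝ) 1 := hIcc_sub m ⟨(c.lt m).le, le_refl _⟩
      have : c.r m ∈ ⋃ n, Set.Ioo (c.l n) (c.r n) := by rw [c.union]; exact ⟨hr01, h⟩
      obtain ⟨k, hk⟩ := Set.mem_iUnion.1 this
      have hkm : k ≠ m := by rintro rfl; exact lt_irrefl _ hk.2
      set y := (max (c.l m) (c.l k) + c.r m) / 2 with hy
      have h2 : y < c.r m := by
        have := c.lt m; have := hk.1
        simp only [hy]; rcases max_cases (c.l m) (c.l k) with ⟨h', _⟩|⟨h', _⟩ <;> rw [h'] <;> linarith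
      have h1 : max (c.l m) (c.l k) < y := by
        have := c.lt m; have := hk.1
        simp only [hy]; rcases max_cases (c.l m) (c.l k) with ⟨h', _⟩|⟨h', _⟩ <;> rw [h'] <;> linarith
      exact (c.disj hkm).ne_of_mem ⟨(le_max_right _ _).trans_lt h1, h2.trans hk.2⟩
        ⟨(le_max_left _ _).trans_lt h1, h2⟩ rfl
  have hlF : ∀ m, c.l m ∈ F := fun m => (hendF m).1
  have hrF : ∀ m, c.r m ∈ F := fun m => (hendF m).2
  -- sum of lengths
  have hlensum : ∀ n : ℕ, ((n:ℝ)+1) * c.len n ≤ 1 := by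
    intro n
    have hsum : ∑ m ∈ Finset.range (n+1), c.len m ≤ 1 := by
      have hvol : MeasureTheory.volume (⋃ m ∈ Finset.range (n+1), Set.Ioo (c.l m) (c.r m))
          = ∑ m ∈ Finset.range (n+1), ENNReal.ofReal (c.len m) := by
        rw [MeasureTheory.measure_biUnion_finset (fun i _ j _ hij => c.disj hij)
          (fun i _ => measurableSet_Ioo)]
        simp [Real.volume_Ioo, FractalComplement.len]
      have hle : MeasureTheory.volume (⋃ m ∈ Finset.range (n+1), Set.Ioo (c.l m) (c.r m))
          ≤ ENNReal.ofReal 1 := by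
        have hss : (⋃ m ∈ Finset.range (n+1), Set.Ioo (c.l m) (c.r m)) ⊆ Set.Icc (0:ℝ) 1 := by
          intro x hx
          obtain ⟨m, _, hm⟩ := Set.mem_iUnion₂.1 hx
          exact hIcc_sub m (Set.Ioo_subset_Icc_self hm)
        calc MeasureTheory.volume _ ≤ MeasureTheory.volume (Set.Icc (0:ℝ) 1) :=
              MeasureTheory.measure_mono hss
          _ = ENNReal.ofReal 1 := by simp [Real.volume_Icc]
      rw [hvol, ← ENNReal.ofReal_sum_of_nonneg (fun m _ => (hlen_pos m).le)] at hle
      exact (ENNReal.ofReal_le_ofReal_iff zero_le_one).1 hle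
    have hconst : ((n:ℝ)+1) * c.len n = ∑ m ∈ Finset.range (n+1), c.len n := by
      rw [Finset.sum_const, Finset.card_range]; push_cast; ring
    rw [hconst]
    exact le_trans (Finset.sum_le_sum fun m hm =>
      hanti (Nat.le_of_lt_succ (Finset.mem_range.1 hm))) hsum
  set L := min ρ 1 with hL
  have hL0 : 0 < L := lt_min hρ one_pos
  have hL1 : L ≤ 1 := min_le_right _ _
  have hLρ : L ≤ ρ := min_le_left _ _
  -- key lower bound on lengths
  have key : ∀ n : ℕ, 4 ≤ n → lam * min L ((n:ℝ) ^ (-(2:ℝ)/c₁)) ≤ c.len n := by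
    intro n hn4
    have hn0 : (0:ℝ) < n := by
      have : (4:ℝ) ≤ n := by exact_mod_cast hn4
      linarith
    set rr := min L ((n:ℝ) ^ (-(2:ℝ)/c₁)) with hrr
    have hrr0 : 0 < rr := lt_min hL0 (Real.rpow_pos_of_pos hn0 _)
    have hrr1 : rr ≤ 1 := (min_le_left _ _).trans hL1
    have hrrρ : rr ≤ ρ := (min_le_left _ _).trans hLρ
    by_contra hcon
    push_neg at hcon
    have hcover : F ⊆ ⋃ k ∈ Finset.range n, Set.Icc (c.l k - rr) (c.r k + rr) := by
      intro x hx
      obtain ⟨k, hk1, hk2⟩ := hlac x hx rr hrr0 hrr1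
      have hkn : k < n := by
        by_contra hkn
        push_neg at hkn
        exact absurd (hk2.trans (hanti hkn)) (not_le.2 hcon)
      have hIccsub : Set.Icc (c.l k) (c.r k) ⊆ Set.Icc (x - rr) (x + rr) := by
        rw [← closure_Ioo (c.lt k).ne]
        exact closure_minimal hk1 isClosed_Icc
      have h1 := (hIccsub ⟨le_refl _, (c.lt k).le⟩).1
      have h2 := (hIccsub ⟨(c.lt k).le, le_refl _⟩).2
      have h3 := c.lt k
      exact Set.mem_biUnion (Finset.mem_range.2 hkn) ⟨by linarith, by linarith⟩
    have hpiece : ∀ k, μ (Set.Icc (c.l k - rr) (c.r k + rr)) ≤ ENNReal.ofReal (2 * rr ^ c₁) := by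
      intro k
      have hsub3 : Set.Icc (c.l k - rr) (c.r k + rr) ⊆
          (Set.Icc (c.l k - rr) (c.l k + rr) ∪ Set.Icc (c.l k) (c.r k)) ∪
            Set.Icc (c.r k - rr) (c.r k + rr) := by
        intro x hx
        rcases le_or_gt x (c.l k + rr) with h | h
        · exact Or.inl (Or.inl ⟨hx.1, h⟩)
        · rcases le_or_gt (c.r k - rr) x with h' | h'
          · exact Or.inr ⟨h', hx.2⟩
          · exact Or.inl (Or.inr ⟨by linarith, by linarith⟩)
      have hμ1 : μ (Set.Icc (c.l k - rr) (c.l k + rr)) ≤ ENNReal.ofReal (rr ^ c₁) :=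
        (ENNReal.le_ofReal_iff_toReal_le (MeasureTheory.measure_ne_top μ _)
          (Real.rpow_nonneg hrr0.le _)).2 ((hdens _ (hlF k) rr hrr0 hrrρ).2)
      have hμ3 : μ (Set.Icc (c.r k - rr) (c.r k + rr)) ≤ ENNReal.ofReal (rr ^ c₁) :=
        (ENNReal.le_ofReal_iff_toReal_le (MeasureTheory.measure_ne_top μ _)
          (Real.rpow_nonneg hrr0.le _)).2 ((hdens _ (hrF k) rr hrr0 hrrρ).2)
      calc μ (Set.Icc (c.l k - rr) (c.r k + rr)) ≤ _ := MeasureTheory.measure_mono hsub3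
        _ ≤ μ (Set.Icc (c.l k - rr) (c.l k + rr) ∪ Set.Icc (c.l k) (c.r k)) +
            μ (Set.Icc (c.r k - rr) (c.r k + rr)) := MeasureTheory.measure_union_le _ _
        _ ≤ (μ (Set.Icc (c.l k - rr) (c.l k + rr)) + μ (Set.Icc (c.l k) (c.r k))) +
            μ (Set.Icc (c.r k - rr) (c.r k + rr)) :=
              add_le_add (MeasureTheory.measure_union_le _ _) le_rfl
        _ ≤ (ENNReal.ofReal (rr ^ c₁) + 0) + ENNReal.ofReal (rr ^ c₁) := by
              gcongr
              exact le_of_eq (hμIcc0 k)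
        _ = ENNReal.ofReal (2 * rr ^ c₁) := by
              rw [add_zero, ← ENNReal.ofReal_add (Real.rpow_nonneg hrr0.le _)
                (Real.rpow_nonneg hrr0.le _)]
              ring_nf
    have htotal : (1:ℝ) ≤ n * (2 * rr ^ c₁) := by
      have h1 : (1:ENNReal) ≤ ENNReal.ofReal ((n:ℝ) * (2 * rr ^ c₁)) := by
        calc (1:ENNReal) = μ F := hμF.symm
          _ ≤ μ (⋃ k ∈ Finset.range n, Set.Icc (c.l k - rr) (c.r k + rr)) :=
              MeasureTheory.measure_mono hcover
          _ ≤ ∑ k ∈ Finset.range n, μ (Set.Icc (c.l k - rr) (c.r k + rr)) :=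
              MeasureTheory.measure_biUnion_finset_le _ _
          _ ≤ ∑ k ∈ Finset.range n, ENNReal.ofReal (2 * rr ^ c₁) :=
              Finset.sum_le_sum (fun k _ => hpiece k)
          _ = ENNReal.ofReal ((n:ℝ) * (2 * rr ^ c₁)) := by
              rw [Finset.sum_const, Finset.card_range, nsmul_eq_mul,
                ← ENNReal.ofReal_natCast n, ← ENNReal.ofReal_mul (Nat.cast_nonneg n)]
      exact ENNReal.one_le_ofReal.1 h1
    have hrrle : rr ^ c₁ ≤ ((n:ℝ)^2)⁻¹ := by
      have h1 : rr ^ c₁ ≤ ((n:ℝ) ^ (-(2:ℝ)/c₁)) ^ c₁ :=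
        Real.rpow_le_rpow hrr0.le (min_le_right _ _) hc₁.le
      have h2 : ((n:ℝ) ^ (-(2:ℝ)/c₁)) ^ c₁ = (n:ℝ) ^ (-(2:ℝ)) := by
        rw [← Real.rpow_mul hn0.le]
        congr 1
        field_simp
      have h3 : (n:ℝ) ^ (-(2:ℝ)) = ((n:ℝ)^2)⁻¹ := by
        rw [show ((-2:ℝ)) = -((2:ℕ):ℝ) by norm_num, Real.rpow_neg hn0.le, Real.rpow_natCast]
      rw [h2, h3] at h1
      exact h1
    have hfin : (n:ℝ) * (2 * rr ^ c₁) ≤ 2 / n := by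
      have heq : (n:ℝ) * (2 * ((n:ℝ)^2)⁻¹) = 2 / n := by field_simp
      nlinarith [sq_nonneg ((n:ℝ))]
    have h4n : (4:ℝ) ≤ n := by exact_mod_cast hn4
    have : (2:ℝ)/n ≤ 1/2 := by
      rw [div_le_div_iff₀ hn0 (by norm_num)]
      linarith
    linarith
  -- constants
  refine ⟨c₁/2, c₂ + 2*c₂/c₁, ⌈max (max ((1+a)/ρ) ((1+a)^2)) (max (a/(2*ρ)) (1/L))⌉₊ + 5,
    by positivity, ?_, ?_⟩
  · have h1 : 0 ≤ 2*c₂/c₁ := by positivity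
    linarith
  intro n hn
  set M := max (max ((1+a)/ρ) ((1+a)^2)) (max (a/(2*ρ)) (1/L)) with hM
  have hnM : M ≤ (n:ℝ) := by
    calc M ≤ (⌈M⌉₊:ℝ) := Nat.le_ceil M
      _ ≤ (n:ℝ) := by
        have : ⌈M⌉₊ ≤ n := le_trans (Nat.le_add_right _ 5) hn
        exact_mod_cast this
  have hn4 : 4 ≤ n := le_trans (by omega) hn
  have hn0 : (0:ℝ) < n := by
    have : (4:ℝ) ≤ n := by exact_mod_cast hn4
    linarith
  have hlen1 : c.len n ≤ 1/n := by
    have h := hlensum n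
    rw [le_div_iff₀ hn0]
    nlinarith [hlen_pos n]
  constructor
  · -- lower bound
    set rr := min L ((n:ℝ) ^ (-(2:ℝ)/c₁)) with hrr
    have hx1 : (n:ℝ) ^ (-(2:ℝ)/c₁) ≤ 1 :=
      Real.rpow_le_one_of_one_le_of_nonpos (by exact_mod_cast Nat.one_le_iff_ne_zero.2 (by omega))
        (by rw [neg_div]; exact neg_nonpos.2 (by positivity))
    have hxpos : (0:ℝ) < (n:ℝ) ^ (-(2:ℝ)/c₁) := Real.rpow_pos_of_pos hn0 _
    have hrr0 : 0 < rr := lt_min hL0 hxpos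
    have hkey := key n hn4
    set R := a * c.len n / 2 with hR
    have hRpos : 0 < R := by
      have := hlen_pos n; positivity
    have hRρ : R ≤ ρ := by
      have h1 : a / (2*ρ) ≤ (n:ℝ) := le_trans (le_trans (le_max_left _ _) (le_max_right _ _)) hnM
      have h2 : a ≤ 2*ρ*n := by
        rw [div_le_iff₀ (by positivity)] at h1; linarith
      have h3 : a * c.len n ≤ a * (1/n) := by
        have := hlen_pos n
        nlinarith
      rw [hR]
      rw [div_le_iff₀ (by norm_num : (0:ℝ) < 2)] at *
      calc a * c.len n ≤ a * (1/n) := h3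
        _ ≤ ρ * 2 := by
          rw [mul_one_div, div_le_iff₀ hn0]
          linarith
    have hRrr : rr ≤ R := by
      have h1 : a * (lam * rr) ≤ a * c.len n := mul_le_mul_of_nonneg_left hkey ha0.le
      have h2 : 2 * rr ≤ a * (lam * rr) := by nlinarith [hrr0.le]
      rw [hR]; linarith
    have hltn := c.lt n
    have hlenEq : c.len n = c.r n - c.l n := rfl
    have hsub2 : Set.Icc (c.l n - R) (c.l n + R) ⊆ c.I a n := by
      show Set.Icc _ _ ⊆ Set.Icc _ _
      apply Set.Icc_subset_Icc
      · rw [hR, hlenEq]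
      · rw [hR, hlenEq]; linarith
    have hd := (hdens _ (hlF n) R hRpos hRρ).1
    have hmono : (μ (Set.Icc (c.l n - R) (c.l n + R))).toReal ≤ (μ (c.I a n)).toReal :=
      ENNReal.toReal_mono (MeasureTheory.measure_ne_top μ _) (MeasureTheory.measure_mono hsub2)
    have hRc : rr ^ c₂ ≤ R ^ c₂ := Real.rpow_le_rpow hrr0.le hRrr hc₂.le
    -- n^(-c₄) ≤ rr^c₂
    have hLx : L * ((n:ℝ) ^ (-(2:ℝ)/c₁)) ≤ rr := by
      apply le_min
      · nlinarith [hL0.le, hxpos.le]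
      · nlinarith [hL0.le, hxpos.le]
    have hnL : (n:ℝ)⁻¹ ≤ L := by
      have h1 : 1/L ≤ (n:ℝ) := le_trans (le_trans (le_max_right _ _) (le_max_right _ _)) hnM
      rw [one_div] at h1
      rw [inv_le_comm₀ hn0 hL0] at *
      exact h1
    have hstep1 : (n:ℝ) ^ (-c₂) ≤ L ^ c₂ := by
      have h1 : ((n:ℝ)⁻¹) ^ c₂ ≤ L ^ c₂ := Real.rpow_le_rpow (by positivity) hnL hc₂.le
      rwa [Real.inv_rpow hn0.le, ← Real.rpow_neg hn0.le] at h1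
    have hstep2 : (n:ℝ) ^ ((-(2:ℝ)/c₁) * c₂) = ((n:ℝ) ^ (-(2:ℝ)/c₁)) ^ c₂ :=
      Real.rpow_mul hn0.le _ _
    have hfinal : (n:ℝ) ^ (-(c₂ + 2*c₂/c₁)) ≤ rr ^ c₂ := by
      have he : -(c₂ + 2*c₂/c₁) = (-c₂) + ((-(2:ℝ)/c₁) * c₂) := by field_simp; ring
      rw [he, Real.rpow_add hn0]
      calc (n:ℝ) ^ (-c₂) * (n:ℝ) ^ ((-(2:ℝ)/c₁) * c₂)
          ≤ L ^ c₂ * ((n:ℝ) ^ (-(2:ℝ)/c₁)) ^ c₂ := by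
            rw [hstep2]
            exact mul_le_mul_of_nonneg_right hstep1 (Real.rpow_nonneg hxpos.le _)
        _ = (L * ((n:ℝ) ^ (-(2:ℝ)/c₁))) ^ c₂ := (Real.mul_rpow hL0.le hxpos.le).symm
        _ ≤ rr ^ c₂ := Real.rpow_le_rpow (by positivity) hLx hc₂.le
    calc (n:ℝ) ^ (-(c₂ + 2*c₂/c₁)) ≤ rr ^ c₂ := hfinal
      _ ≤ R ^ c₂ := hRc
      _ ≤ (μ (Set.Icc (c.l n - R) (c.l n + R))).toReal := hd
      _ ≤ (μ (c.I a n)).toReal := hmono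
  · -- upper bound
    set R' := (1+a) * c.len n with hR'
    have h1a : (0:ℝ) < 1 + a := by linarith
    have hR'pos : 0 < R' := by have := hlen_pos n; positivity
    have hR'n : R' ≤ (1+a)/n := by
      rw [hR', div_eq_mul_inv, ← one_div]
      exact mul_le_mul_of_nonneg_left hlen1 h1a.le
    have hR'ρ : R' ≤ ρ := by
      have h1 : (1+a)/ρ ≤ (n:ℝ) := le_trans (le_trans (le_max_left _ _) (le_max_left _ _)) hnM
      have h2 : 1+a ≤ ρ*n := by rw [div_le_iff₀ hρ] at h1; linarith
      calc R' ≤ (1+a)/n := hR'n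
        _ ≤ ρ := by rw [div_le_iff₀ hn0]; linarith
    have hltn := c.lt n
    have hlenEq : c.len n = c.r n - c.l n := rfl
    have hsub : c.I a n ⊆ Set.Icc (c.l n - R') (c.l n + R') := by
      show Set.Icc _ _ ⊆ Set.Icc _ _
      apply Set.Icc_subset_Icc
      · rw [hR', hlenEq]; nlinarith
      · rw [hR', hlenEq]; nlinarith
    have hmono : (μ (c.I a n)).toReal ≤ (μ (Set.Icc (c.l n - R') (c.l n + R'))).toReal :=
      ENNReal.toReal_mono (MeasureTheory.measure_ne_top μ _) (MeasureTheory.measure_mono hsub)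
    have hd := (hdens _ (hlF n) R' hR'pos hR'ρ).2
    have hch : R' ^ c₁ ≤ ((1+a)/n) ^ c₁ := Real.rpow_le_rpow hR'pos.le hR'n hc₁.le
    have hsq : (1+a)^2 ≤ (n:ℝ) := le_trans (le_trans (le_max_right _ _) (le_max_left _ _)) hnM
    have hexp : ((1+a)/(n:ℝ)) ^ c₁ ≤ (n:ℝ) ^ (-(c₁/2)) := by
      have hd1 : ((1+a)/(n:ℝ)) ^ c₁ = (1+a) ^ c₁ * ((n:ℝ) ^ c₁)⁻¹ := by
        rw [Real.div_rpow h1a.le hn0.le, div_eq_mul_inv]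
      have hp1 : (1+a) ^ c₁ ≤ (n:ℝ) ^ (c₁/2) := by
        have he1 : (1+a) ^ c₁ = (((1+a)^2 : ℝ)) ^ (c₁/2) := by
          rw [show ((1+a)^2 : ℝ) = (1+a) ^ ((2:ℕ):ℝ) by rw [Real.rpow_natCast],
            ← Real.rpow_mul h1a.le]
          congr 1
          push_cast
          ring
        rw [he1]
        exact Real.rpow_le_rpow (by positivity) hsq (by positivity)
      have he2 : (n:ℝ) ^ (-(c₁/2)) = (n:ℝ) ^ (c₁/2) * ((n:ℝ) ^ c₁)⁻¹ := by
        rw [← Real.rpow_neg hn0.le, ← Real.rpow_add hn0]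
        congr 1
        ring
      rw [hd1, he2]
      exact mul_le_mul_of_nonneg_right hp1 (by positivity)
    calc (μ (c.I a n)).toReal ≤ (μ (Set.Icc (c.l n - R') (c.l n + R'))).toReal := hmono
      _ ≤ R' ^ c₁ := hd
      _ ≤ ((1+a)/n) ^ c₁ := hch
      _ ≤ (n:ℝ) ^ (-(c₁/2)) := hexp
end
end
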